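/- arXiv:math/0604509 — 2 statements merged into one kernel-verified Lean document; each statement's English description precedes it below -/
import Mathlib

section
/- Let D ⊂⊂ ℂⁿ be a bounded domain and X ⊆ D a subdomain that is Lipschitz in D, i.e., μ_D(X) := sup{κ_D(z;v)/κ_X(z;v) : z ∈ X, v ∈ T_z X \ {0}} < 1, where κ denotes the Kobayashi infinitesimal metric. Then X is degenerate in D: every limit of every iterated function system {f_j ∘ ⋯ ∘ f_1} with f_j : D → X holomorphic is constant. -/
open Metric Set Filter
open scoped ENNReal NNReal

noncomputable section

/-- The open unit disc in `ℂ`. -/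
def uDisc : Set ℂ := Metric.ball 0 1

/-- The inverse hyperbolic tangent. -/
def artanh (x : ℝ) : ℝ := Real.log ((1 + x) / (1 - x)) / 2

/-- The Poincaré (hyperbolic) distance on the unit disc. -/
def pDist (ζ η : ℂ) : ℝ :=
  artanh ‖(ζ - η) / (1 - (starRingEnd ℂ) ζ * η)‖

/-- Hyperbolic ball in the unit disc. -/
def hBall (z : ℂ) (r : ℝ) : Set ℂ := {w ∈ uDisc | pDist w z < r}

/-- Bloch radius of a subset of the unit disc. -/
def blochRadiusD (U : Set ℂ) : ℝ≥0∞ :=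
  ⨆ (r : NNReal) (_ : ∃ z ∈ uDisc, hBall z (r : ℝ) ⊆ U), (r : ℝ≥0∞)

/-- `tanh` extended to `ℝ≥0∞`, with `tanh ∞ = 1`. -/
def tanhE (x : ℝ≥0∞) : ℝ := if x = ⊤ then 1 else Real.tanh x.toReal

variable {E : Type*} [NormedAddCommGroup E] [NormedSpace ℂ E]

/-- Admissible values for the Lempert function of `D` between `z` and `w`. -/
def lemSet (D : Set E) (z w : E) : Set ℝ :=
  {c | ∃ (f : ℂ → E) (ζ : ℂ), DifferentiableOn ℂ f uDisc ∧ MapsTo f uDisc D ∧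
    f 0 = z ∧ ζ ∈ uDisc ∧ f ζ = w ∧ c = pDist 0 ζ}

/-- The Kobayashi (pseudo)distance of `D`, defined via chains of analytic discs. -/
def kDist (D : Set E) (z w : E) : ℝ :=
  sInf {s | ∃ (m : ℕ) (p : ℕ → E), p 0 = z ∧ p m = w ∧ (∀ i, i ≤ m → p i ∈ D) ∧
      s = ∑ i ∈ Finset.range m, sInf (lemSet D (p i) (p (i + 1)))}

/-- Kobayashi ball of center `z` and radius `r` in `D`. -/
def kBall (D : Set E) (z : E) (r : ℝ) : Set E := {w ∈ D | kDist D w z < r}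

/-- Bloch radius of `X ⊆ D` with respect to the Kobayashi distance of `D`. -/
def blochRadius (D X : Set E) : ℝ≥0∞ :=
  ⨆ (r : NNReal) (_ : ∃ z ∈ D, kBall D z (r : ℝ) ⊆ X), (r : ℝ≥0∞)

/-- The Kobayashi infinitesimal (pseudo)metric of `D`. -/
def kMetric (D : Set E) (z v : E) : ℝ :=
  sInf {c | ∃ (f : ℂ → E) (r : ℝ), DifferentiableOn ℂ f uDisc ∧ MapsTo f uDisc D ∧
    f 0 = z ∧ 0 < r ∧ deriv f 0 = r • v ∧ c = 1 / r}

/-- The hyperbolic Lipschitz constant `μ_D(X)` of `X` inside `D`. -/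
def lipConst (D X : Set E) : ℝ :=
  sSup {t | ∃ z ∈ X, ∃ v : E, v ≠ 0 ∧ t = kMetric D z v / kMetric X z v}

/-- `comps f j = f j ∘ ⋯ ∘ f 0`, the iterated function system associated to `f`. -/
def comps (f : ℕ → E → E) : ℕ → E → E
  | 0 => f 0
  | (j + 1) => f (j + 1) ∘ comps f j

/-- `F` is a limit, in the compact-open topology on `D`, of a subsequence of the
iterated function system associated to `f`. -/
def IFSLimit (D : Set E) (f : ℕ → E → E) (F : E → E) : Prop :=
  ∃ s : ℕ → ℕ, StrictMono s ∧
    TendstoLocallyUniformlyOn (fun j => comps f (s j)) F atTop D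

/-- `X ⊆ D` is degenerate in `D`: every limit of every iterated function system of
holomorphic self-maps of `D` with image in `X` is constant. -/
def Degenerate (D X : Set E) : Prop :=
  ∀ f : ℕ → E → E, (∀ j, DifferentiableOn ℂ (f j) D ∧ MapsTo (f j) D X) →
    ∀ F : E → E, IFSLimit D f F → ∃ c, ∀ z ∈ D, F z = c

/-- A complex geodesic of `D`: a holomorphic isometry from the Poincaré distance of
the unit disc to the Kobayashi distance of `D`. -/
def IsComplexGeodesic (D : Set E) (φ : ℂ → E) : Prop :=
  DifferentiableOn ℂ φ uDisc ∧ MapsTo φ uDisc D ∧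
    ∀ ζ ∈ uDisc, ∀ η ∈ uDisc, kDist D (φ ζ) (φ η) = pDist ζ η

/-- A Lempert projection associated to the complex geodesic `φ`: a holomorphic
retraction of `D` onto `φ(𝔻)` with affine fibers. -/
def IsLempertProjection (D : Set E) (φ : ℂ → E) (ρ : E → E) : Prop :=
  DifferentiableOn ℂ ρ D ∧ MapsTo ρ D (φ '' uDisc) ∧
    (∀ z ∈ D, ρ (ρ z) = ρ z) ∧ (∀ ζ ∈ uDisc, ρ (φ ζ) = φ ζ) ∧
    ∀ ζ ∈ uDisc, ∃ (L : E →ₗ[ℂ] ℂ) (c : ℂ), L ≠ 0 ∧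
      {w ∈ D | ρ w = φ ζ} = {w ∈ D | L w = c}

/-- A Lempert projection device `(φ, ρ, ρ̃)`: a complex geodesic, an associated
Lempert projection, and the left inverse `ρ̃ = φ⁻¹ ∘ ρ`. -/
def IsLempertDevice (D : Set E) (φ : ℂ → E) (ρ : E → E) (ρt : E → ℂ) : Prop :=
  IsComplexGeodesic D φ ∧ IsLempertProjection D φ ρ ∧
    ∀ z ∈ D, ρt z ∈ uDisc ∧ φ (ρt z) = ρ z

/-- `X` is 1-Bloch in `D`: there is `C > 0` such that for every Lempert projection
device, `ρ̃(X)` is contained in a Bloch subdomain of the disc of Bloch radius `< C`. -/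
def OneBloch (D X : Set E) : Prop :=
  ∃ C > (0 : ℝ), ∀ (φ : ℂ → E) (ρ : E → E) (ρt : E → ℂ),
    IsLempertDevice D φ ρ ρt → ∃ U : Set ℂ, IsOpen U ∧ IsConnected U ∧ U ⊆ uDisc ∧
      ρt '' X ⊆ U ∧ blochRadiusD U < ENNReal.ofReal C

/-- `X` is c-Bloch in `D`: there is `C > 0` such that for every Lempert projection
device, `ρ̃(X ∩ φ(𝔻))` is contained in a Bloch subdomain of Bloch radius `≤ C`. -/
def CBloch (D X : Set E) : Prop :=
  ∃ C > (0 : ℝ), ∀ (φ : ℂ → E) (ρ : E → E) (ρt : E → ℂ),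
    IsLempertDevice D φ ρ ρt → ∃ U : Set ℂ, IsOpen U ∧ IsConnected U ∧ U ⊆ uDisc ∧
      ρt '' (X ∩ φ '' uDisc) ⊆ U ∧ blochRadiusD U ≤ ENNReal.ofReal C



section AuxLemmas

variable {E : Type*} [NormedAddCommGroup E] [NormedSpace ℂ E]

lemma kMetric_nonneg (D : Set E) (z v : E) : 0 ≤ kMetric D z v := by
  apply Real.sInf_nonneg
  rintro c ⟨f, r, -, -, -, hr, -, rfl⟩
  positivity

lemma kSet_bddBelow (D : Set E) (z v : E) :
    BddBelow {c | ∃ (f : ℂ → E) (r : ℝ), DifferentiableOn ℂ f uDisc ∧ MapsTo f uDisc D ∧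
      f 0 = z ∧ 0 < r ∧ deriv f 0 = r • v ∧ c = 1 / r} := by
  refine ⟨0, ?_⟩
  rintro c ⟨f, r, -, -, -, hr, -, rfl⟩
  positivity

lemma mem_kSet_linear {D : Set E} {z : E} {δ : ℝ} (hδ : 0 < δ)
    (hball : Metric.ball z δ ⊆ D) {v : E} (hv : v ≠ 0) :
    (‖v‖ / δ) ∈ {c | ∃ (f : ℂ → E) (r : ℝ), DifferentiableOn ℂ f uDisc ∧ MapsTo f uDisc D ∧
      f 0 = z ∧ 0 < r ∧ deriv f 0 = r • v ∧ c = 1 / r} := by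
  have hv' : (0:ℝ) < ‖v‖ := norm_pos_iff.2 hv
  set c : E := (δ / ‖v‖ : ℝ) • v with hc
  have hcn : ‖c‖ = δ := by
    rw [hc, norm_smul, Real.norm_eq_abs, abs_of_pos (by positivity), div_mul_cancel₀ _ hv'.ne']
  refine ⟨fun lam : ℂ => z + lam • c, δ / ‖v‖, ?_, ?_, by simp, by positivity, ?_, ?_⟩
  · exact ((differentiable_id.smul_const c).const_add z).differentiableOn
  · intro lam hlam
    apply hball
    have hl : ‖lam‖ < 1 := by simpa [uDisc, Metric.mem_ball] using hlam
    have : ‖(z + lam • c) - z‖ < δ := by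
      rw [add_sub_cancel_left, norm_smul, hcn]
      calc ‖lam‖ * δ < 1 * δ := by exact mul_lt_mul_of_pos_right hl hδ
        _ = δ := one_mul δ
    simpa [Metric.mem_ball, dist_eq_norm] using this
  · have h : HasDerivAt (fun lam : ℂ => z + lam • c) ((1:ℂ) • c) 0 :=
      ((hasDerivAt_id (0:ℂ)).smul_const c).const_add z
    rw [h.deriv, one_smul]
  · rw [one_div_div]

lemma kSet_nonempty {D : Set E} (hDo : IsOpen D) {z : E} (hz : z ∈ D) (v : E) :
    Set.Nonempty {c | ∃ (f : ℂ → E) (r : ℝ), DifferentiableOn ℂ f uDisc ∧ MapsTo f uDisc D ∧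
      f 0 = z ∧ 0 < r ∧ deriv f 0 = r • v ∧ c = 1 / r} := by
  rcases eq_or_ne v 0 with rfl | hv
  · exact ⟨1, fun _ => z, 1, differentiableOn_const z, fun _ _ => hz, rfl, one_pos,
      by simp, by norm_num⟩
  · obtain ⟨δ, hδ, hball⟩ := Metric.isOpen_iff.mp hDo z hz
    exact ⟨_, mem_kSet_linear hδ hball hv⟩

lemma kMetric_le_of_ball {D : Set E} {z : E} {δ : ℝ} (hδ : 0 < δ)
    (hball : Metric.ball z δ ⊆ D) (v : E) : kMetric D z v ≤ ‖v‖ / δ := by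
  rcases eq_or_ne v 0 with rfl | hv
  · have h0 : (0:ℝ) ≤ ‖(0:E)‖ / δ := by positivity
    -- show kMetric D z 0 ≤ anything nonneg, since constant discs give arbitrarily small values
    refine le_trans ?_ h0
    have key : ∀ ε > (0:ℝ), kMetric D z 0 ≤ ε := by
      intro ε hε
      apply csInf_le (kSet_bddBelow D z 0)
      exact ⟨fun _ => z, 1/ε, differentiableOn_const z,
        fun _ _ => hball (Metric.mem_ball_self hδ), rfl, by positivity, by simp, by
          rw [one_div_one_div]⟩
    exact le_of_forall_pos_le_add fun ε hε => by simpa using key ε hε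
  · exact csInf_le (kSet_bddBelow D z v) (mem_kSet_linear hδ hball hv)

lemma kMetric_zero_of_mem {D : Set E} {z : E} (hz : z ∈ D) : kMetric D z 0 = 0 := by
  refine le_antisymm ?_ (kMetric_nonneg D z 0)
  have key : ∀ ε > (0:ℝ), kMetric D z 0 ≤ ε := by
    intro ε hε
    apply csInf_le (kSet_bddBelow D z 0)
    exact ⟨fun _ => z, 1/ε, differentiableOn_const z, fun _ _ => hz, rfl, by positivity,
      by simp, by rw [one_div_one_div]⟩
  exact le_of_forall_pos_le_add fun ε hε => by simpa using key ε hε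

/-- Lower bound for the Kobayashi metric of a bounded domain, via the Schwarz lemma. -/
lemma le_kMetric {X : Set E} (hXo : IsOpen X) {R : ℝ} (hR : 0 < R)
    (hXR : X ⊆ Metric.ball 0 R) {p : E} (hp : p ∈ X) (v : E) :
    ‖v‖ / (2 * R) ≤ kMetric X p v := by
  rcases eq_or_ne v 0 with rfl | hv
  · simpa using kMetric_nonneg X p 0
  · apply le_csInf (kSet_nonempty hXo hp v)
    rintro c ⟨f, r, hfd, hfm, hf0, hr, hdf, rfl⟩
    have hfd' : DifferentiableOn ℂ f (Metric.ball (0:ℂ) 1) := hfd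
    have hmaps : MapsTo f (Metric.ball (0:ℂ) 1) (Metric.ball (f 0) (2 * R)) := by
      intro lam hlam
      have h1 : f lam ∈ X := hfm hlam
      have h2 : f 0 ∈ X := hfm (Metric.mem_ball_self one_pos)
      have n1 : ‖f lam‖ < R := by simpa [Metric.mem_ball, dist_eq_norm] using hXR h1
      have n2 : ‖f 0‖ < R := by simpa [Metric.mem_ball, dist_eq_norm] using hXR h2
      have : dist (f lam) (f 0) < 2 * R := by
        calc dist (f lam) (f 0) ≤ ‖f lam‖ + ‖f 0‖ := by
              simpa [dist_eq_norm] using norm_sub_le (f lam) (f 0)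
          _ < 2 * R := by linarith
      exact this
    have hS := Complex.norm_deriv_le_div_of_mapsTo_ball hfd' (hmaps.mono_right Metric.ball_subset_closedBall) one_pos
    rw [hdf, norm_smul, Real.norm_eq_abs, abs_of_pos hr] at hS
    have hS' : r * ‖v‖ ≤ 2 * R := by simpa using hS
    rw [div_le_div_iff₀ (by positivity) hr]
    nlinarith [norm_nonneg v]

/-- The Kobayashi metric is decreased by holomorphic maps. -/
lemma kMetric_comp_le {D X' : Set E} (hDo : IsOpen D) {g : E → E}
    (hg : DifferentiableOn ℂ g D) (hgm : MapsTo g D X') {p : E} (hp : p ∈ D) (v : E) :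
    kMetric X' (g p) (fderiv ℂ g p v) ≤ kMetric D p v := by
  apply csInf_le_csInf (kSet_bddBelow X' (g p) (fderiv ℂ g p v)) (kSet_nonempty hDo hp v)
  rintro c ⟨f, r, hfd, hfm, hf0, hr, hdf, rfl⟩
  have h0mem : (0:ℂ) ∈ uDisc := Metric.mem_ball_self one_pos
  have hfa : DifferentiableAt ℂ f 0 := by
    have : IsOpen uDisc := Metric.isOpen_ball
    exact hfd.differentiableAt (this.mem_nhds h0mem)
  have hga : DifferentiableAt ℂ g (f 0) := by
    rw [hf0]; exact hg.differentiableAt (hDo.mem_nhds hp)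
  have hderiv : HasDerivAt (g ∘ f) (fderiv ℂ g (f 0) (deriv f 0)) 0 :=
    hga.hasFDerivAt.comp_hasDerivAt 0 hfa.hasDerivAt
  refine ⟨g ∘ f, r, hg.comp hfd hfm, hgm.comp hfm, by simp [Function.comp, hf0], hr, ?_, rfl⟩
  rw [hderiv.deriv, hf0, hdf]
  exact (fderiv ℂ g p).map_smul_of_tower r v

lemma kMetric_mono {D X : Set E} (hXo : IsOpen X) (hXD : X ⊆ D) {z : E} (hz : z ∈ X) (v : E) :
    kMetric D z v ≤ kMetric X z v := by
  apply csInf_le_csInf (kSet_bddBelow D z v) (kSet_nonempty hXo hz v)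
  rintro c ⟨f, r, hfd, hfm, hf0, hr, hdf, rfl⟩
  exact ⟨f, r, hfd, hfm.mono_right hXD, hf0, hr, hdf, rfl⟩

lemma lipConst_bddAbove {D X : Set E} (hXo : IsOpen X) (hXD : X ⊆ D) :
    BddAbove {t | ∃ z ∈ X, ∃ v : E, v ≠ 0 ∧ t = kMetric D z v / kMetric X z v} := by
  refine ⟨1, ?_⟩
  rintro t ⟨z, hz, v, hv, rfl⟩
  exact div_le_one_of_le₀ (kMetric_mono hXo hXD hz v) (kMetric_nonneg X z v)

lemma lipConst_nonneg {D X : Set E} [Nontrivial E] (hXo : IsOpen X) (hXD : X ⊆ D)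
    {z : E} (hz : z ∈ X) : 0 ≤ lipConst D X := by
  obtain ⟨v, hv⟩ := exists_ne (0 : E)
  have hmem : kMetric D z v / kMetric X z v ∈
      {t | ∃ z ∈ X, ∃ v : E, v ≠ 0 ∧ t = kMetric D z v / kMetric X z v} := ⟨z, hz, v, hv, rfl⟩
  have h1 : kMetric D z v / kMetric X z v ≤ lipConst D X :=
    le_csSup (lipConst_bddAbove hXo hXD) hmem
  exact le_trans (div_nonneg (kMetric_nonneg D z v) (kMetric_nonneg X z v)) h1

/-- The key infinitesimal Lipschitz estimate coming from `lipConst`. -/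
lemma kMetric_le_lip {D X : Set E} [Nontrivial E] (hXo : IsOpen X) (hXD : X ⊆ D)
    {R : ℝ} (hR : 0 < R) (hXR : X ⊆ Metric.ball 0 R) {z : E} (hz : z ∈ X) (v : E) :
    kMetric D z v ≤ lipConst D X * kMetric X z v := by
  rcases eq_or_ne v 0 with rfl | hv
  · rw [kMetric_zero_of_mem (hXD hz)]
    exact mul_nonneg (lipConst_nonneg hXo hXD hz) (kMetric_nonneg X z 0)
  · have ht : kMetric D z v / kMetric X z v ≤ lipConst D X :=
      le_csSup (lipConst_bddAbove hXo hXD) ⟨z, hz, v, hv, rfl⟩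
    have hXpos : 0 < kMetric X z v := by
      have h1 : (0:ℝ) < ‖v‖ / (2 * R) := by
        have : (0:ℝ) < ‖v‖ := norm_pos_iff.2 hv
        positivity
      exact lt_of_lt_of_le h1 (le_kMetric hXo hR hXR hz v)
    calc kMetric D z v = kMetric D z v / kMetric X z v * kMetric X z v :=
          (div_mul_cancel₀ _ hXpos.ne').symm
      _ ≤ lipConst D X * kMetric X z v := mul_le_mul_of_nonneg_right ht hXpos.le

end AuxLemmas

/-- in a bounded domain in `ℂⁿ`, a Lipschitz subdomain is degenerate. -/
theorem stmt5 {n : ℕ} (D X : Set (EuclideanSpace ℂ (Fin n)))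
    (hDo : IsOpen D) (hDc : IsConnected D) (hDb : Bornology.IsBounded D)
    (hXo : IsOpen X) (hXc : IsConnected X) (hXD : X ⊆ D)
    (hLip : lipConst D X < 1) :
    Degenerate D X := by
  intro f hf F hF
  obtain ⟨z0, hz0⟩ := hDc.nonempty
  rcases subsingleton_or_nontrivial (EuclideanSpace ℂ (Fin n)) with hS | hNT
  · exact ⟨F z0, fun z _ => by rw [Subsingleton.elim z z0]⟩
  obtain ⟨s, hsmono, hconv⟩ := hF
  obtain ⟨x0, hx0⟩ := hXc.nonempty
  obtain ⟨R0, hR0⟩ := hDb.subset_ball 0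
  set R := max R0 1 with hRdef
  have hR : (0:ℝ) < R := lt_of_lt_of_le one_pos (le_max_right _ _)
  have hDR : D ⊆ Metric.ball 0 R := hR0.trans (Metric.ball_subset_ball (le_max_left _ _))
  have hXR : X ⊆ Metric.ball 0 R := hXD.trans hDR
  set μ := lipConst D X with hμdef
  have hμ0 : 0 ≤ μ := lipConst_nonneg hXo hXD hx0
  have hμ1 : μ < 1 := hLip
  -- basic properties of the iterated system
  have hcomp : ∀ j, DifferentiableOn ℂ (comps f j) D ∧ MapsTo (comps f j) D X := by
    intro j
    induction j with
    | zero => exact hf 0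
    | succ j ih =>
      exact ⟨(hf (j+1)).1.comp ih.1 (ih.2.mono_right hXD),
        (hf (j+1)).2.comp (ih.2.mono_right hXD)⟩
  -- key geometric decay of the Kobayashi metric along the system
  have key : ∀ j, ∀ q ∈ D, ∀ v, kMetric X (comps f j q) (fderiv ℂ (comps f j) q v)
      ≤ μ ^ j * kMetric D q v := by
    intro j
    induction j with
    | zero =>
      intro q hq v
      simpa [comps] using kMetric_comp_le hDo (hf 0).1 (hf 0).2 hq v
    | succ j ih =>
      intro q hq v
      have hqj : comps f j q ∈ X := (hcomp j).2 hq
      have hqD : comps f j q ∈ D := hXD hqj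
      have h1 : DifferentiableAt ℂ (f (j+1)) (comps f j q) :=
        (hf (j+1)).1.differentiableAt (hDo.mem_nhds hqD)
      have h2 : DifferentiableAt ℂ (comps f j) q :=
        (hcomp j).1.differentiableAt (hDo.mem_nhds hq)
      have hchain : fderiv ℂ (comps f (j+1)) q
          = (fderiv ℂ (f (j+1)) (comps f j q)).comp (fderiv ℂ (comps f j) q) :=
        fderiv_comp q h1 h2
      calc kMetric X (comps f (j+1) q) (fderiv ℂ (comps f (j+1)) q v)
          = kMetric X (f (j+1) (comps f j q))
              (fderiv ℂ (f (j+1)) (comps f j q) (fderiv ℂ (comps f j) q v)) := by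
            rw [hchain]; rfl
        _ ≤ kMetric D (comps f j q) (fderiv ℂ (comps f j) q v) :=
            kMetric_comp_le hDo (hf (j+1)).1 (hf (j+1)).2 hqD _
        _ ≤ μ * kMetric X (comps f j q) (fderiv ℂ (comps f j) q v) :=
            kMetric_le_lip hXo hXD hR hXR hqj _
        _ ≤ μ * (μ ^ j * kMetric D q v) := mul_le_mul_of_nonneg_left (ih q hq v) hμ0
        _ = μ ^ (j+1) * kMetric D q v := by ring
  -- local constancy of the limit F
  have hloc : ∀ p ∈ D, ∃ ε > (0:ℝ), Metric.ball p ε ⊆ D ∧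
      ∀ z ∈ Metric.ball p ε, ∀ w ∈ Metric.ball p ε, F z = F w := by
    intro p hp
    obtain ⟨δ, hδ, hball⟩ := Metric.isOpen_iff.mp hDo p hp
    have hδ2 : (0:ℝ) < δ/2 := by linarith
    have hBD : Metric.ball p (δ/2) ⊆ D :=
      (Metric.ball_subset_ball (by linarith)).trans hball
    refine ⟨δ/2, hδ2, hBD, ?_⟩
    intro z hz w hw
    have hbound : ∀ j, ∀ q ∈ Metric.ball p (δ/2),
        ‖fderiv ℂ (comps f j) q‖ ≤ 2 * R * μ ^ j / (δ/2) := by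
      intro j q hq
      have hqD : q ∈ D := hBD hq
      have hsub : Metric.ball q (δ/2) ⊆ D := by
        intro x hx
        apply hball
        calc dist x p ≤ dist x q + dist q p := dist_triangle _ _ _
          _ < δ/2 + δ/2 := add_lt_add hx hq
          _ = δ := by ring
      apply ContinuousLinearMap.opNorm_le_bound _ (by positivity)
      intro v
      have e1 : ‖fderiv ℂ (comps f j) q v‖ / (2*R)
          ≤ kMetric X (comps f j q) (fderiv ℂ (comps f j) q v) :=
        le_kMetric hXo hR hXR ((hcomp j).2 hqD) _
      have e2 := key j q hqD v
      have e3 : kMetric D q v ≤ ‖v‖ / (δ/2) := kMetric_le_of_ball hδ2 hsub v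
      have h4 : ‖fderiv ℂ (comps f j) q v‖ / (2*R) ≤ μ ^ j * (‖v‖ / (δ/2)) :=
        e1.trans (e2.trans (mul_le_mul_of_nonneg_left e3 (pow_nonneg hμ0 j)))
      have h5 : ‖fderiv ℂ (comps f j) q v‖ ≤ μ ^ j * (‖v‖ / (δ/2)) * (2*R) :=
        (div_le_iff₀ (by positivity)).mp h4
      calc ‖fderiv ℂ (comps f j) q v‖ ≤ μ ^ j * (‖v‖ / (δ/2)) * (2*R) := h5
        _ = 2 * R * μ ^ j / (δ/2) * ‖v‖ := by ring
    have hdiff : ∀ j, ∀ x ∈ Metric.ball p (δ/2),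
        HasFDerivWithinAt (comps f j) (fderiv ℂ (comps f j) x) (Metric.ball p (δ/2)) x :=
      fun j x hx =>
        ((hcomp j).1.differentiableAt (hDo.mem_nhds (hBD hx))).hasFDerivAt.hasFDerivWithinAt
    have hMVT : ∀ j, ‖comps f j z - comps f j w‖ ≤ 2 * R * μ ^ j / (δ/2) * ‖z - w‖ :=
      fun j => (convex_ball p (δ/2)).norm_image_sub_le_of_norm_hasFDerivWithin_le
        (hdiff j) (hbound j) hw hz
    have hzt := hconv.tendsto_at (hBD hz)
    have hwt := hconv.tendsto_at (hBD hw)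
    have hsubt : Tendsto (fun j => ‖comps f (s j) z - comps f (s j) w‖) atTop
        (nhds ‖F z - F w‖) := (hzt.sub hwt).norm
    have hC0 : Tendsto (fun j => 2 * R * μ ^ j / (δ/2) * ‖z - w‖) atTop (nhds 0) := by
      have h := tendsto_pow_atTop_nhds_zero_of_lt_one hμ0 hμ1
      have h2 : Tendsto (fun j => 2 * R * μ ^ j / (δ/2) * ‖z - w‖) atTop
          (nhds (2 * R * 0 / (δ/2) * ‖z - w‖)) :=
        ((h.const_mul (2*R)).div_const (δ/2)).mul_const _
      simpa using h2
    have hle : ∀ j, ‖comps f (s j) z - comps f (s j) w‖ ≤ 2 * R * μ ^ j / (δ/2) * ‖z - w‖ := by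
      intro j
      refine (hMVT (s j)).trans ?_
      have hpow : μ ^ (s j) ≤ μ ^ j := pow_le_pow_of_le_one hμ0 hμ1.le hsmono.le_apply
      gcongr
    have hn0 : ‖F z - F w‖ ≤ 0 := le_of_tendsto_of_tendsto' hsubt hC0 hle
    have : ‖F z - F w‖ = 0 := le_antisymm hn0 (norm_nonneg _)
    exact sub_eq_zero.mp (norm_eq_zero.mp this)
  -- conclude by connectedness
  refine ⟨F z0, ?_⟩
  have hAopen : IsOpen {z | z ∈ D ∧ F z = F z0} := by
    rw [Metric.isOpen_iff]
    rintro z ⟨hzD, hzF⟩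
    obtain ⟨ε, hε, hballD, hconst⟩ := hloc z hzD
    exact ⟨ε, hε, fun w hw =>
      ⟨hballD hw, (hconst w hw z (Metric.mem_ball_self hε)).trans hzF⟩⟩
  have hBopen : IsOpen {z | z ∈ D ∧ F z ≠ F z0} := by
    rw [Metric.isOpen_iff]
    rintro z ⟨hzD, hzF⟩
    obtain ⟨ε, hε, hballD, hconst⟩ := hloc z hzD
    exact ⟨ε, hε, fun w hw =>
      ⟨hballD hw, fun h => hzF (((hconst z (Metric.mem_ball_self hε) w hw)).trans h)⟩⟩
  have hdisj : Disjoint {z | z ∈ D ∧ F z = F z0} {z | z ∈ D ∧ F z ≠ F z0} := by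
    rw [Set.disjoint_left]
    rintro z ⟨-, h1⟩ ⟨-, h2⟩
    exact h2 h1
  have hcover : D ⊆ {z | z ∈ D ∧ F z = F z0} ∪ {z | z ∈ D ∧ F z ≠ F z0} := by
    intro z hz
    by_cases h : F z = F z0
    · exact Or.inl ⟨hz, h⟩
    · exact Or.inr ⟨hz, h⟩
  have hne : (D ∩ {z | z ∈ D ∧ F z = F z0}).Nonempty := ⟨z0, hz0, hz0, rfl⟩
  have hDA : D ⊆ {z | z ∈ D ∧ F z = F z0} :=
    hDc.isPreconnected.subset_left_of_subset_union hAopen hBopen hdisj hcover hne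
  exact fun z hz => (hDA hz).2
end
end

section
/- Let D ⊂ ℂⁿ be a bounded convex domain, {φ_j} a sequence of complex geodesics converging in the compact-open topology to a complex geodesic φ : 𝔻 → D, and let ρ_{φ_j} be Lempert projections associated to φ_j. Then any limit ρ of {ρ_{φ_j}} in the compact-open topology satisfies: ρ(D) = φ(𝔻), ρ ∘ ρ = ρ, ρ fixes φ(𝔻) pointwise, and ρ has affine fibers; i.e., ρ is a Lempert projection associated to φ. -/
open Metric Set Filter
open scoped ENNReal NNReal

noncomputable section

variable {E : Type*} [NormedAddCommGroup E] [NormedSpace ℂ E]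

section Basics

lemma uDisc_isOpen : IsOpen uDisc := isOpen_ball

lemma zero_mem_uDisc : (0:ℂ) ∈ uDisc := by simp [uDisc]

lemma mem_uDisc_iff {z : ℂ} : z ∈ uDisc ↔ ‖z‖ < 1 := by
  simp [uDisc, Complex.dist_eq]

lemma artanh_zero : artanh 0 = 0 := by simp [artanh]

lemma artanh_nonneg {x : ℝ} (h0 : 0 ≤ x) (h1 : x < 1) : 0 ≤ artanh x := by
  have h2 : (0:ℝ) < 1 - x := by linarith
  have : (1:ℝ) ≤ (1 + x) / (1 - x) := (le_div_iff₀ h2).2 (by linarith)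
  have := Real.log_nonneg this
  unfold artanh; linarith

lemma artanh_eq_zero {x : ℝ} (h0 : 0 ≤ x) (h1 : x < 1) (h : artanh x = 0) : x = 0 := by
  have h2 : (0:ℝ) < 1 - x := by linarith
  have hl : Real.log ((1 + x) / (1 - x)) = 0 := by unfold artanh at h; linarith
  have hpos : (0:ℝ) < (1 + x) / (1 - x) := div_pos (by linarith) h2
  rcases Real.log_eq_zero.1 hl with h' | h' | h'
  · exact absurd h' hpos.ne'
  · have : 1 + x = 1 - x := by
      field_simp at h'; linarith
    linarith
  · exfalso; rw [h'] at hpos; norm_num at hpos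

lemma artanh_mono {x y : ℝ} (h0 : 0 ≤ x) (hxy : x ≤ y) (h1 : y < 1) : artanh x ≤ artanh y := by
  have hx1 : x < 1 := lt_of_le_of_lt hxy h1
  have h2 : (0:ℝ) < 1 - x := by linarith
  have h3 : (0:ℝ) < 1 - y := by linarith
  have hle : (1 + x) / (1 - x) ≤ (1 + y) / (1 - y) := by
    rw [div_le_div_iff₀ h2 h3]; nlinarith
  have hpos : (0:ℝ) < (1 + x) / (1 - x) := div_pos (by linarith) h2
  have := Real.log_le_log hpos hle
  unfold artanh; linarith

/-- If `artanh x ≤ B` with `0 ≤ x < 1` then `x ≤ (e^{2B}-1)/(e^{2B}+1)`. -/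
lemma le_of_artanh_le {x B : ℝ} (h0 : 0 ≤ x) (h1 : x < 1) (h : artanh x ≤ B) :
    x ≤ (Real.exp (2*B) - 1) / (Real.exp (2*B) + 1) := by
  have h2 : (0:ℝ) < 1 - x := by linarith
  have hpos : (0:ℝ) < (1 + x) / (1 - x) := div_pos (by linarith) h2
  have hl : Real.log ((1 + x) / (1 - x)) ≤ 2 * B := by unfold artanh at h; linarith
  have he : (1 + x) / (1 - x) ≤ Real.exp (2*B) := by
    rw [← Real.exp_log hpos]; exact Real.exp_le_exp.2 hl
  have he' : 1 + x ≤ Real.exp (2*B) * (1 - x) := (div_le_iff₀ h2).1 he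
  have hE : (0:ℝ) < Real.exp (2*B) + 1 := by positivity
  rw [le_div_iff₀ hE]; nlinarith

lemma exp_ratio_lt_one (B : ℝ) : (Real.exp (2*B) - 1) / (Real.exp (2*B) + 1) < 1 := by
  have hE : (0:ℝ) < Real.exp (2*B) + 1 := by positivity
  rw [div_lt_one hE]; linarith

lemma exp_ratio_nonneg {B : ℝ} (hB : 0 ≤ B) :
    0 ≤ (Real.exp (2*B) - 1) / (Real.exp (2*B) + 1) := by
  have h1 : (1:ℝ) ≤ Real.exp (2*B) := by
    rw [← Real.exp_zero]; exact Real.exp_le_exp.2 (by linarith)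
  have hE : (0:ℝ) < Real.exp (2*B) + 1 := by positivity
  exact div_nonneg (by linarith) hE.le

lemma pDist_zero_left (ζ : ℂ) : pDist 0 ζ = artanh ‖ζ‖ := by
  simp [pDist]

lemma pDist_right_zero (ζ : ℂ) : pDist ζ 0 = artanh ‖ζ‖ := by
  simp [pDist]

lemma pDist_self (ζ : ℂ) : pDist ζ ζ = 0 := by
  simp [pDist, artanh]

/-- The fundamental identity `|1 - ζ̄η|² - |ζ-η|² = (1-|ζ|²)(1-|η|²)`. -/
lemma normSq_identity (ζ η : ℂ) :
    Complex.normSq (1 - (starRingEnd ℂ) ζ * η) - Complex.normSq (ζ - η)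
      = (1 - Complex.normSq ζ) * (1 - Complex.normSq η) := by
  simp only [Complex.normSq_apply, Complex.sub_re, Complex.sub_im, Complex.mul_re,
    Complex.mul_im, Complex.one_re, Complex.one_im, Complex.conj_re, Complex.conj_im]
  ring

lemma denom_pos {ζ η : ℂ} (hζ : ζ ∈ uDisc) (hη : η ∈ uDisc) :
    0 < ‖1 - (starRingEnd ℂ) ζ * η‖ := by
  rw [mem_uDisc_iff] at hζ hη
  have h1 : ‖(starRingEnd ℂ) ζ * η‖ < 1 := by
    rw [norm_mul, Complex.norm_conj]; nlinarith [norm_nonneg ζ, norm_nonneg η]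
  have h2 : (1 : ℂ) - (starRingEnd ℂ) ζ * η ≠ 0 := by
    intro h
    have : (1:ℂ) = (starRingEnd ℂ) ζ * η := by linear_combination h
    rw [← this] at h1; simp at h1
  exact norm_pos_iff.mpr h2

lemma mobius_abs_lt_one {ζ η : ℂ} (hζ : ζ ∈ uDisc) (hη : η ∈ uDisc) :
    ‖(ζ - η) / (1 - (starRingEnd ℂ) ζ * η)‖ < 1 := by
  have hd := denom_pos hζ hη
  rw [norm_div, div_lt_one hd]
  have key := normSq_identity ζ η
  rw [mem_uDisc_iff] at hζ hη
  have h1 : Complex.normSq ζ < 1 := by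
    rw [← Complex.sq_norm]; nlinarith [norm_nonneg ζ]
  have h2 : Complex.normSq η < 1 := by
    rw [← Complex.sq_norm]; nlinarith [norm_nonneg η]
  have h3 : Complex.normSq (ζ - η) < Complex.normSq (1 - (starRingEnd ℂ) ζ * η) := by nlinarith
  have := Complex.sq_norm (ζ - η)
  have := Complex.sq_norm (1 - (starRingEnd ℂ) ζ * η)
  nlinarith [norm_nonneg (ζ - η)]

lemma pDist_nonneg {ζ η : ℂ} (hζ : ζ ∈ uDisc) (hη : η ∈ uDisc) : 0 ≤ pDist ζ η :=
  artanh_nonneg (norm_nonneg _) (mobius_abs_lt_one hζ hη)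

lemma pDist_eq_zero_imp {ζ η : ℂ} (hζ : ζ ∈ uDisc) (hη : η ∈ uDisc)
    (h : pDist ζ η = 0) : ζ = η := by
  have h1 := mobius_abs_lt_one hζ hη
  have h2 := artanh_eq_zero (norm_nonneg _) h1 h
  have hd := denom_pos hζ hη
  rw [norm_div] at h2
  have h3 : ‖ζ - η‖ = 0 := by
    rcases div_eq_zero_iff.1 h2 with h' | h'
    · exact h'
    · exact absurd h' hd.ne'
  exact sub_eq_zero.1 (norm_eq_zero.1 h3)
  
end Basics
section LemSetK
variable {E : Type*} [NormedAddCommGroup E] [NormedSpace ℂ E]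

lemma lemSet_nonneg {D : Set E} {z w : E} {c : ℝ} (hc : c ∈ lemSet D z w) : 0 ≤ c := by
  obtain ⟨f, ζ, _, _, _, hζ, _, rfl⟩ := hc
  exact pDist_nonneg zero_mem_uDisc hζ

lemma sInf_lemSet_nonneg (D : Set E) (z w : E) : 0 ≤ sInf (lemSet D z w) :=
  Real.sInf_nonneg fun _ hc => lemSet_nonneg hc

lemma sInf_lemSet_le {D : Set E} {z w : E} {c : ℝ} (hc : c ∈ lemSet D z w) :
    sInf (lemSet D z w) ≤ c :=
  csInf_le ⟨0, fun _ hx => lemSet_nonneg hx⟩ hc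

/-- Affine discs: if `ball a δ ⊆ D` and `‖b - a‖ < δ` then `artanh (‖b-a‖/δ)` is an
admissible Lempert value between `a` and `b`. -/
lemma affine_mem_lemSet {D : Set E} {a b : E} {δ : ℝ} (hδ : 0 < δ)
    (hball : Metric.ball a δ ⊆ D) (hab : ‖b - a‖ < δ) :
    artanh (‖b - a‖ / δ) ∈ lemSet D a b := by
  rcases eq_or_ne b a with h | hne
  · subst h
    refine ⟨fun _ => b, 0, differentiableOn_const b, ?_, rfl, zero_mem_uDisc, rfl, ?_⟩
    · intro t _; exact hball (mem_ball_self hδ)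
    · rw [pDist_self]; simp [artanh_zero]
  · set s : ℝ := ‖b - a‖ with hs
    have hspos : 0 < s := by rwa [hs, norm_pos_iff, sub_ne_zero]
    set v : E := ((δ : ℂ) / (s : ℂ)) • (b - a) with hv
    refine ⟨fun t => a + t • v, ((s / δ : ℝ) : ℂ), ?_, ?_, by simp, ?_, ?_, ?_⟩
    · apply Differentiable.differentiableOn
      exact (ContinuousLinearMap.differentiable
        (ContinuousLinearMap.smulRight (ContinuousLinearMap.id ℂ ℂ) v)).const_add a
    · intro t ht
      apply hball
      rw [mem_ball_iff_norm]
      have : a + t • v - a = t • v := by abel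
      rw [this, norm_smul, hv, norm_smul]
      have hδs : ‖(δ : ℂ) / (s : ℂ)‖ = δ / s := by
        rw [norm_div, Complex.norm_real, Complex.norm_real,
          Real.norm_of_nonneg hδ.le, Real.norm_of_nonneg hspos.le]
      rw [hδs, ← hs]
      have ht1 : ‖t‖ < 1 := by exact mem_uDisc_iff.1 ht
      calc ‖t‖ * (δ / s * s) < 1 * (δ / s * s) := by
            apply mul_lt_mul_of_pos_right ht1; positivity
        _ = δ := by field_simp
    · rw [mem_uDisc_iff]
      have : ‖((s / δ : ℝ) : ℂ)‖ = s / δ := by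
        rw [Complex.norm_real, Real.norm_of_nonneg (by positivity)]
      rw [this]
      rw [div_lt_one hδ]; exact hab
    · have hcalc : (((s / δ : ℝ) : ℂ)) • v = b - a := by
        rw [hv, smul_smul]
        have hsne : (s:ℂ) ≠ 0 := Complex.ofReal_ne_zero.2 hspos.ne'
        have hδne : (δ:ℂ) ≠ 0 := Complex.ofReal_ne_zero.2 hδ.ne'
        have : ((s / δ : ℝ) : ℂ) * ((δ : ℂ) / (s : ℂ)) = 1 := by
          push_cast
          field_simp
        rw [this, one_smul]
      show a + ((s / δ : ℝ) : ℂ) • v = b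
      rw [hcalc]; abel
    · rw [pDist_zero_left, Complex.norm_real, Real.norm_of_nonneg (by positivity)]

/-- Push-forward of admissible values under a holomorphic self-map of `D`. -/
lemma lemSet_comp {D : Set E} {a b : E} {g : E → E} (hg : DifferentiableOn ℂ g D)
    (hgm : MapsTo g D D) {c : ℝ} (hc : c ∈ lemSet D a b) : c ∈ lemSet D (g a) (g b) := by
  obtain ⟨f, ζ, hf, hfm, h0, hζ, hb, rfl⟩ := hc
  exact ⟨g ∘ f, ζ, hg.comp hf hfm, hgm.comp hfm, by simp [Function.comp, h0],
    hζ, by simp [Function.comp, hb], rfl⟩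

lemma kDist_le_chain {D : Set E} {z w : E} (m : ℕ) (p : ℕ → E) (h0 : p 0 = z) (hm : p m = w)
    (hp : ∀ i, i ≤ m → p i ∈ D) :
    kDist D z w ≤ ∑ i ∈ Finset.range m, sInf (lemSet D (p i) (p (i + 1))) := by
  apply csInf_le
  · refine ⟨0, fun s hs => ?_⟩
    obtain ⟨m', p', _, _, _, rfl⟩ := hs
    exact Finset.sum_nonneg fun i _ => sInf_lemSet_nonneg D _ _
  · exact ⟨m, p, h0, hm, hp, rfl⟩

lemma kDist_nonneg (D : Set E) (z w : E) : 0 ≤ kDist D z w := by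
  apply Real.sInf_nonneg
  rintro s ⟨m, p, _, _, _, rfl⟩
  exact Finset.sum_nonneg fun i _ => sInf_lemSet_nonneg D _ _

lemma kDist_self {D : Set E} {x : E} (hx : x ∈ D) : kDist D x x = 0 := by
  refine le_antisymm ?_ (kDist_nonneg D x x)
  have := kDist_le_chain (D := D) 0 (fun _ => x) rfl rfl (fun i _ => hx)
  simpa using this

lemma isCompact_segment' (z w : E) : IsCompact (segment ℝ z w) := by
  rw [segment_eq_image']
  exact isCompact_Icc.image <| by continuity

/-- Key upper bound: there are `B, δ` such that for every holomorphic self-map `g` of `D`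
and every `w'` that is `δ/2`-close to `w`, `kDist D (g z) (g w') ≤ B`. -/
lemma kDist_push_bound {D : Set E} (hDo : IsOpen D) (hconv : Convex ℝ D) {z w : E}
    (hz : z ∈ D) (hw : w ∈ D) :
    ∃ (B δ : ℝ), 0 ≤ B ∧ 0 < δ ∧ Metric.ball w δ ⊆ D ∧
      ∀ (g : E → E) (w' : E), DifferentiableOn ℂ g D → MapsTo g D D →
        ‖w' - w‖ ≤ δ / 2 → kDist D (g z) (g w') ≤ B := by
  obtain ⟨δ, hδ, hthick⟩ :=
    (isCompact_segment' z w).exists_thickening_subset_open hDo (hconv.segment_subset hz hw)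
  have hseg : ∀ x ∈ segment ℝ z w, Metric.ball x δ ⊆ D := by
    intro x hx y hy
    exact hthick (Metric.mem_thickening_iff.2 ⟨x, hx, by rwa [mem_ball] at hy⟩)
  set m : ℕ := max 1 ⌈2 * ‖w - z‖ / δ⌉₊ with hmdef
  have hm1 : 1 ≤ m := le_max_left _ _
  have hmpos : (0:ℝ) < m := by exact_mod_cast hm1
  have hstep : ‖w - z‖ / m ≤ δ / 2 := by
    have hceil : 2 * ‖w - z‖ / δ ≤ m := le_trans (Nat.le_ceil _) (by exact_mod_cast le_max_right _ _)
    rw [div_le_div_iff₀ hmpos (by norm_num : (0:ℝ) < 2)]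
    have := (div_le_iff₀ hδ).1 hceil
    nlinarith [norm_nonneg (w - z)]
  -- the chain
  set p : ℕ → E := fun i => z + (((min i m : ℕ) : ℝ) / m) • (w - z) with hp
  have hp0 : p 0 = z := by simp [hp]
  have hpm : p m = w := by
    simp only [hp, min_self]
    rw [div_self hmpos.ne', one_smul]; abel
  have hpseg : ∀ i, p i ∈ segment ℝ z w := by
    intro i
    rw [segment_eq_image']
    refine ⟨((min i m : ℕ) : ℝ) / m, ⟨by positivity, ?_⟩, by rw [hp]⟩
    rw [div_le_one hmpos]
    exact_mod_cast min_le_right i m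
  have hpD : ∀ i, p i ∈ D := fun i => hconv.segment_subset hz hw (hpseg i)
  have hstep' : ∀ i, i < m → ‖p (i+1) - p i‖ ≤ δ / 2 := by
    intro i hi
    have h1 : min (i+1) m = i + 1 := min_eq_left (by omega)
    have h2 : min i m = i := min_eq_left (by omega)
    have harith : (((i+1 : ℕ)):ℝ)/m - ((i : ℕ):ℝ)/m = 1/m := by push_cast; ring
    have : p (i+1) - p i = ((1 : ℝ) / m) • (w - z) := by
      calc p (i+1) - p i
          = ((((i+1:ℕ)):ℝ)/m) • (w-z) - (((i:ℕ):ℝ)/m) • (w-z) := by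
            simp only [hp, h1, h2]; abel
        _ = (((((i+1:ℕ)):ℝ)/m) - (((i:ℕ):ℝ)/m)) • (w-z) := (sub_smul _ _ _).symm
        _ = ((1:ℝ)/↑m) • (w-z) := by rw [harith]
    rw [this, norm_smul, Real.norm_of_nonneg (by positivity), one_div,
      inv_mul_eq_div]
    exact hstep
  refine ⟨(m + 1) * artanh (1/2), δ,
    mul_nonneg (by positivity) (artanh_nonneg (by norm_num) (by norm_num)), hδ,
    hseg w (right_mem_segment ℝ z w), ?_⟩
  · intro g w' hg hgm hw'
    -- extended chain q : z → ... → w → w'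
    set q : ℕ → E := fun i => if i ≤ m then p i else w' with hq
    have hq0 : q 0 = z := by simp [hq, hp0]
    have hqm1 : q (m + 1) = w' := by simp [hq]
    have hw'D : w' ∈ D := hseg w (right_mem_segment ℝ z w)
      (by rw [mem_ball_iff_norm]; linarith [hw', hδ])
    have hqD : ∀ i, q i ∈ D := by
      intro i; by_cases h : i ≤ m <;> simp [hq, h, hpD, hw'D]
    have hlink : ∀ i, i < m + 1 →
        sInf (lemSet D (g (q i)) (g (q (i+1)))) ≤ artanh (1/2) := by
      intro i hi
      have hballi : Metric.ball (q i) δ ⊆ D := by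
        have : q i = p i := by simp [hq, (by omega : i ≤ m)]
        rw [this]; exact hseg (p i) (hpseg i)
      have hnear : ‖q (i+1) - q i‖ ≤ δ / 2 := by
        by_cases h : i + 1 ≤ m
        · have : q (i+1) = p (i+1) := by simp [hq, h]
          rw [this, (by simp [hq, (by omega : i ≤ m)] : q i = p i)]
          exact hstep' i (by omega)
        · have hi' : i = m := by omega
          have : q (i+1) = w' := by simp [hq, h]
          rw [this, (by simp [hq, (by omega : i ≤ m), hi'] : q i = p i), hi', hpm]
          exact hw'
      have hlt : ‖q (i+1) - q i‖ < δ := lt_of_le_of_lt hnear (by linarith)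
      have hmem := affine_mem_lemSet hδ hballi hlt
      have hmem2 := lemSet_comp hg hgm hmem
      refine le_trans (sInf_lemSet_le hmem2) ?_
      apply artanh_mono (by positivity) _ (by norm_num)
      rw [div_le_div_iff₀ hδ (by norm_num : (0:ℝ) < 2)]
      linarith
    have hchain := kDist_le_chain (m+1) (fun i => g (q i))
      (by show g (q 0) = g z; rw [hq0]) (by show g (q (m+1)) = g w'; rw [hqm1])
      (fun i _ => hgm (hqD i))
    refine le_trans hchain ?_
    calc ∑ i ∈ Finset.range (m+1), sInf (lemSet D (g (q i)) (g (q (i+1))))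
        ≤ ∑ _i ∈ Finset.range (m+1), artanh (1/2) :=
          Finset.sum_le_sum fun i hi => hlink i (Finset.mem_range.1 hi)
      _ = (m + 1) * artanh (1/2) := by
          rw [Finset.sum_const, Finset.card_range]; push_cast; ring

end LemSetK
section Lipschitz
variable {E : Type*} [NormedAddCommGroup E] [NormedSpace ℂ E]

lemma affine_differentiable (z v : E) : Differentiable ℂ (fun t : ℂ => z + t • v) :=
  (ContinuousLinearMap.differentiable
    (ContinuousLinearMap.smulRight (ContinuousLinearMap.id ℂ ℂ) v)).const_add z

/-- Uniform Lipschitz estimate for holomorphic self-maps of a bounded domain. -/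
lemma holo_lipschitz {D : Set E} {x0 : E} {R : ℝ} (hDR : D ⊆ Metric.ball x0 R)
    {g : E → E} (hg : DifferentiableOn ℂ g D) (hgm : MapsTo g D D)
    {z w : E} (hz : z ∈ D) {δ : ℝ} (hδ : 0 < δ) (hball : Metric.ball z δ ⊆ D)
    (hw : ‖w - z‖ < δ) : ‖g w - g z‖ ≤ 2 * R / δ * ‖w - z‖ := by
  rcases eq_or_ne w z with rfl | hne
  · simp
  · have hwz : (0:ℝ) < ‖w - z‖ := by rwa [norm_pos_iff, sub_ne_zero]
    set R₁ : ℝ := δ / ‖w - z‖ with hR₁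
    have hR₁pos : 0 < R₁ := by positivity
    set F : ℂ → E := fun t => g (z + t • (w - z)) with hF
    have hmem : ∀ t : ℂ, t ∈ Metric.ball (0:ℂ) R₁ → z + t • (w - z) ∈ D := by
      intro t ht
      apply hball
      rw [mem_ball_iff_norm]
      have : z + t • (w - z) - z = t • (w - z) := by abel
      rw [this, norm_smul]
      rw [mem_ball_iff_norm, sub_zero] at ht
      calc ‖t‖ * ‖w - z‖ < R₁ * ‖w - z‖ := by exact mul_lt_mul_of_pos_right ht hwz
        _ = δ := by rw [hR₁]; field_simp
    have hd : DifferentiableOn ℂ F (Metric.ball (0:ℂ) R₁) := by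
      apply hg.comp ((affine_differentiable z (w - z)).differentiableOn)
      intro t ht; exact hmem t ht
    have hzD : g z ∈ Metric.ball x0 R := hDR (hgm hz)
    have hRpos : 0 < R := lt_of_le_of_lt dist_nonneg (mem_ball.1 hzD)
    have hmaps : MapsTo F (Metric.ball (0:ℂ) R₁) (Metric.ball (F 0) (2 * R)) := by
      intro t ht
      have h1 : F t ∈ Metric.ball x0 R := hDR (hgm (hmem t ht))
      have h2 : F 0 = g z := by simp [hF]
      rw [mem_ball] at h1 ⊢
      rw [h2]
      calc dist (F t) (g z) ≤ dist (F t) x0 + dist x0 (g z) := dist_triangle _ _ _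
        _ < R + R := by
            apply add_lt_add h1
            rw [dist_comm]; exact mem_ball.1 hzD
        _ = 2 * R := by ring
    have h1mem : (1:ℂ) ∈ Metric.ball (0:ℂ) R₁ := by
      rw [mem_ball_iff_norm, sub_zero, norm_one, hR₁, lt_div_iff₀ hwz, one_mul]
      exact hw
    have := Complex.dist_le_div_mul_dist_of_mapsTo_ball hd (hmaps.mono_right Metric.ball_subset_closedBall) h1mem
    have hF1 : F 1 = g w := by
      simp only [hF, one_smul]
      congr 1; abel
    have hF0 : F 0 = g z := by simp [hF]
    rw [hF1, hF0, dist_eq_norm, dist_eq_norm, sub_zero, norm_one, mul_one] at this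
    calc ‖g w - g z‖ ≤ 2 * R / R₁ := this
      _ = 2 * R / δ * ‖w - z‖ := by rw [hR₁]; field_simp

/-- Complex geodesics are injective. -/
lemma geodesic_inj {D : Set E} {φ : ℂ → E} (hφ : IsComplexGeodesic D φ)
    {a b : ℂ} (ha : a ∈ uDisc) (hb : b ∈ uDisc) (h : φ a = φ b) : a = b := by
  have h1 := hφ.2.2 a ha b hb
  rw [h, kDist_self (hφ.2.1 hb)] at h1
  exact pDist_eq_zero_imp ha hb h1.symm

end Lipschitz
open scoped Topology
section Core
variable {E : Type*} [NormedAddCommGroup E] [NormedSpace ℂ E]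
variable {D : Set E} {φseq : ℕ → ℂ → E} {φ : ℂ → E} {ρseq : ℕ → E → E} {ρ : E → E}

lemma rho_mapsTo (hgeo : ∀ j, IsComplexGeodesic D (φseq j))
    (hρ : ∀ j, IsLempertProjection D (φseq j) (ρseq j)) (j : ℕ) :
    MapsTo (ρseq j) D D :=
  (hρ j).2.1.mono_right ((hgeo j).2.1.image_subset)

lemma keyBound (hDo : IsOpen D) (hDconv : Convex ℝ D)
    (hgeo : ∀ j, IsComplexGeodesic D (φseq j)) (hφ : IsComplexGeodesic D φ)
    (hconv : TendstoLocallyUniformlyOn φseq φ atTop uDisc)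
    (hρ : ∀ j, IsLempertProjection D (φseq j) (ρseq j))
    {z : E} (hz : z ∈ D) :
    ∃ (r0 : ℝ) (N : ℕ), 0 ≤ r0 ∧ r0 < 1 ∧ ∀ j, N ≤ j → ∀ η ∈ uDisc,
      φseq j η = ρseq j z → ‖η‖ ≤ r0 := by
  have hφ0D : φ 0 ∈ D := hφ.2.1 zero_mem_uDisc
  obtain ⟨B, δ, hB, hδ, hballD, hbound⟩ := kDist_push_bound hDo hDconv hz hφ0D
  have htend : Tendsto (fun j => φseq j 0) atTop (𝓝 (φ 0)) := hconv.tendsto_at zero_mem_uDisc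
  obtain ⟨N, hN⟩ := Metric.tendsto_atTop.1 htend (δ/2) (by positivity)
  refine ⟨(Real.exp (2*B) - 1)/(Real.exp (2*B) + 1), N, exp_ratio_nonneg hB,
    exp_ratio_lt_one B, ?_⟩
  intro j hj η hη hηz
  have h1 : ‖φseq j 0 - φ 0‖ ≤ δ/2 := by
    have := hN j hj; rw [dist_eq_norm] at this; linarith
  have h2 := hbound (ρseq j) (φseq j 0) (hρ j).1 (rho_mapsTo hgeo hρ j) h1
  have h3 : ρseq j (φseq j 0) = φseq j 0 := (hρ j).2.2.2.1 0 zero_mem_uDisc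
  rw [h3] at h2
  have h4 : kDist D (φseq j η) (φseq j 0) = pDist η 0 := (hgeo j).2.2 η hη 0 zero_mem_uDisc
  rw [hηz] at h4
  rw [h4, pDist_right_zero] at h2
  exact le_of_artanh_le (norm_nonneg η) (mem_uDisc_iff.1 hη) h2

lemma keyLim (hφ : IsComplexGeodesic D φ)
    (hconv : TendstoLocallyUniformlyOn φseq φ atTop uDisc)
    {k : ℕ → ℕ} (hk : Tendsto k atTop atTop) {η : ℕ → ℂ} {r0 : ℝ} (hr0 : r0 < 1)
    (hηb : ∀ m, ‖η m‖ ≤ r0) {ζ : ℂ} (hηt : Tendsto η atTop (𝓝 ζ)) :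
    Tendsto (fun m => φseq (k m) (η m)) atTop (𝓝 (φ ζ)) := by
  set K : Set ℂ := Metric.closedBall 0 r0 with hK
  have hKu : K ⊆ uDisc := by
    intro x hx
    rw [mem_uDisc_iff]
    have := mem_closedBall.1 hx
    rw [Complex.dist_eq, sub_zero] at this
    exact lt_of_le_of_lt this hr0
  have hηK : ∀ m, η m ∈ K := fun m => by
    rw [hK, mem_closedBall, Complex.dist_eq, sub_zero]; exact hηb m
  have hζK : ζ ∈ K := Metric.isClosed_closedBall.mem_of_tendsto hηt (Filter.Eventually.of_forall hηK)
  have hunif : TendstoUniformlyOn φseq φ atTop K :=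
    (tendstoLocallyUniformlyOn_iff_forall_isCompact uDisc_isOpen).1 hconv K hKu
      (isCompact_closedBall 0 r0)
  have hcont : ContinuousAt φ ζ :=
    hφ.1.continuousOn.continuousAt (uDisc_isOpen.mem_nhds (hKu hζK))
  have h2 : Tendsto (fun m => φ (η m)) atTop (𝓝 (φ ζ)) := hcont.tendsto.comp hηt
  rw [Metric.tendsto_atTop] at h2 ⊢
  intro ε hε
  obtain ⟨N1, hN1⟩ := eventually_atTop.1 ((Metric.tendstoUniformlyOn_iff.1 hunif) (ε/2)
    (by positivity))
  obtain ⟨N2, hN2⟩ := h2 (ε/2) (by positivity)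
  obtain ⟨N3, hN3⟩ := tendsto_atTop_atTop.1 hk N1
  refine ⟨max N2 N3, fun m hm => ?_⟩
  have hm2 : N2 ≤ m := le_trans (le_max_left _ _) hm
  have hm3 : N3 ≤ m := le_trans (le_max_right _ _) hm
  calc dist (φseq (k m) (η m)) (φ ζ)
      ≤ dist (φseq (k m) (η m)) (φ (η m)) + dist (φ (η m)) (φ ζ) := dist_triangle _ _ _
    _ < ε/2 + ε/2 := add_lt_add
        (by rw [dist_comm]; exact hN1 (k m) (hN3 m hm3) (η m) (hηK m)) (hN2 m hm2)
    _ = ε := by ring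

lemma coreLemma (hDo : IsOpen D) (hDconv : Convex ℝ D)
    (hgeo : ∀ j, IsComplexGeodesic D (φseq j)) (hφ : IsComplexGeodesic D φ)
    (hconv : TendstoLocallyUniformlyOn φseq φ atTop uDisc)
    (hρ : ∀ j, IsLempertProjection D (φseq j) (ρseq j))
    (hρconv : TendstoLocallyUniformlyOn ρseq ρ atTop D)
    {z : E} (hz : z ∈ D)
    {η : ℕ → ℂ} (hη : ∀ j, η j ∈ uDisc ∧ φseq j (η j) = ρseq j z)
    {ns : ℕ → ℕ} (hns : Tendsto ns atTop atTop) :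
    ∃ (ms : ℕ → ℕ) (ζ : ℂ), ζ ∈ uDisc ∧
      Tendsto (fun m => η (ns (ms m))) atTop (𝓝 ζ) ∧ ρ z = φ ζ := by
  obtain ⟨r0, N, hr00, hr01, hbd⟩ := keyBound hDo hDconv hgeo hφ hconv hρ hz
  obtain ⟨M, hM⟩ := tendsto_atTop_atTop.1 hns N
  have hξK : ∀ m : ℕ, η (ns (M + m)) ∈ Metric.closedBall (0:ℂ) r0 := by
    intro m
    rw [mem_closedBall, Complex.dist_eq, sub_zero]
    exact hbd (ns (M+m)) (hM (M+m) (Nat.le_add_right M m)) _ (hη _).1 (hη _).2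
  obtain ⟨ζ, hζK, s, hs, hξs⟩ :=
    (isCompact_closedBall (0:ℂ) r0).tendsto_subseq hξK
  have hζu : ζ ∈ uDisc := by
    rw [mem_uDisc_iff]
    have := mem_closedBall.1 hζK
    rw [Complex.dist_eq, sub_zero] at this
    exact lt_of_le_of_lt this hr01
  set ms : ℕ → ℕ := fun m => M + s m with hmsdef
  have hms : Tendsto ms atTop atTop :=
    tendsto_atTop_mono (fun m => le_trans hs.le_apply (Nat.le_add_left _ _)) tendsto_id
  have hbdd : ∀ m, ‖η (ns (ms m))‖ ≤ r0 := by
    intro m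
    have := hξK (s m)
    rw [mem_closedBall, Complex.dist_eq, sub_zero] at this
    exact this
  have hηt : Tendsto (fun m => η (ns (ms m))) atTop (𝓝 ζ) := hξs
  have hφlim := keyLim hφ hconv (hns.comp hms) hr01 hbdd hηt
  have hρt : Tendsto (fun m => ρseq (ns (ms m)) z) atTop (𝓝 (ρ z)) :=
    (hρconv.tendsto_at hz).comp (hns.comp hms)
  have heq : ρ z = φ ζ := by
    apply tendsto_nhds_unique hρt
    exact hφlim.congr fun m => (hη (ns (ms m))).2
  exact ⟨ms, ζ, hζu, hηt, heq⟩

lemma keyC (hDo : IsOpen D) (hDconv : Convex ℝ D)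
    (hgeo : ∀ j, IsComplexGeodesic D (φseq j)) (hφ : IsComplexGeodesic D φ)
    (hconv : TendstoLocallyUniformlyOn φseq φ atTop uDisc)
    (hρ : ∀ j, IsLempertProjection D (φseq j) (ρseq j))
    (hρconv : TendstoLocallyUniformlyOn ρseq ρ atTop D)
    {z : E} (hz : z ∈ D) : ∃ ζ ∈ uDisc, ρ z = φ ζ := by
  have hηex : ∀ j, ∃ e, e ∈ uDisc ∧ φseq j e = ρseq j z := fun j => by
    obtain ⟨e, he, hee⟩ := (hρ j).2.1 hz
    exact ⟨e, he, hee⟩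
  choose η hη1 hη2 using hηex
  obtain ⟨ms, ζ, hζ, _, heq⟩ := coreLemma hDo hDconv hgeo hφ hconv hρ hρconv hz
    (η := η) (fun j => ⟨hη1 j, hη2 j⟩) (ns := id) tendsto_id
  exact ⟨ζ, hζ, heq⟩

lemma keyEta (hDo : IsOpen D) (hDconv : Convex ℝ D)
    (hgeo : ∀ j, IsComplexGeodesic D (φseq j)) (hφ : IsComplexGeodesic D φ)
    (hconv : TendstoLocallyUniformlyOn φseq φ atTop uDisc)
    (hρ : ∀ j, IsLempertProjection D (φseq j) (ρseq j))
    (hρconv : TendstoLocallyUniformlyOn ρseq ρ atTop D)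
    {w : E} (hw : w ∈ D) {ζ : ℂ} (hζ : ζ ∈ uDisc) (hρw : ρ w = φ ζ)
    {η : ℕ → ℂ} (hη : ∀ j, η j ∈ uDisc ∧ φseq j (η j) = ρseq j w) :
    Tendsto η atTop (𝓝 ζ) := by
  apply Filter.tendsto_of_subseq_tendsto
  intro ns hns
  obtain ⟨ms, ζ', hζ', hlim, heq⟩ := coreLemma hDo hDconv hgeo hφ hconv hρ hρconv hw hη hns
  have hzz : ζ' = ζ := geodesic_inj hφ hζ' hζ (by rw [← heq, hρw])
  exact ⟨ms, by rwa [hzz] at hlim⟩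

end Core
section Diff
open scoped Topology
variable {E : Type*} [NormedAddCommGroup E] [NormedSpace ℂ E]

lemma line_hasDerivAt (z v : E) (t : ℂ) :
    HasDerivAt (fun t : ℂ => z + t • v) v t := by
  have h := (ContinuousLinearMap.smulRight (ContinuousLinearMap.id ℂ ℂ) v).hasDerivAt (x := t)
  have h2 : (ContinuousLinearMap.smulRight (ContinuousLinearMap.id ℂ ℂ) v) 1 = v := by
    simp
  rw [h2] at h
  exact h.const_add z

/-- Cauchy-type estimate: a holomorphic function bounded by `M` on `ball z0 (2δ)` has
fderiv bounded by `2M/δ` on `ball z0 δ`. -/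
lemma fderiv_bound_of_bound {D : Set E} (hDo : IsOpen D) {h : E → E}
    (hh : DifferentiableOn ℂ h D) {z0 : E} {δ : ℝ} (hδ : 0 < δ)
    (hball : Metric.ball z0 (2*δ) ⊆ D) {M : ℝ} (hM : 0 ≤ M)
    (hbd : ∀ x ∈ Metric.ball z0 (2*δ), ‖h x‖ ≤ M)
    {z : E} (hz : z ∈ Metric.ball z0 δ) :
    ‖fderiv ℂ h z‖ ≤ 2 * M / δ := by
  have hzD : z ∈ D := hball (Metric.ball_subset_ball (by linarith) hz)
  have hzdist : dist z z0 < δ := mem_ball.1 hz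
  apply ContinuousLinearMap.opNorm_le_bound _ (by positivity)
  intro v
  rcases eq_or_ne v 0 with rfl | hv
  · simp
  · have hvn : (0:ℝ) < ‖v‖ := norm_pos_iff.2 hv
    set r : ℝ := δ / ‖v‖ with hr
    have hrpos : 0 < r := by positivity
    set F : ℂ → E := fun t => h (z + t • v) with hF
    have hmem : ∀ t : ℂ, t ∈ Metric.ball (0:ℂ) r → z + t • v ∈ Metric.ball z0 (2*δ) := by
      intro t ht
      rw [mem_ball_iff_norm] at ht ⊢
      rw [sub_zero] at ht
      calc ‖z + t • v - z0‖ ≤ ‖z - z0‖ + ‖t • v‖ := by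
            have : z + t • v - z0 = (z - z0) + t • v := by abel
            rw [this]; exact norm_add_le _ _
        _ < δ + r * ‖v‖ := by
            apply add_lt_add
            · rwa [← dist_eq_norm]
            · rw [norm_smul]; exact mul_lt_mul_of_pos_right ht hvn
        _ = 2*δ := by rw [hr]; field_simp; ring
    have hd : DifferentiableOn ℂ F (Metric.ball (0:ℂ) r) := by
      apply hh.comp ((affine_differentiable z v).differentiableOn)
      intro t ht; exact hball (hmem t ht)
    have hDF : HasDerivAt F (fderiv ℂ h z v) 0 := by
      have hhz : HasFDerivAt h (fderiv ℂ h z) z :=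
        (hh.differentiableAt (hDo.mem_nhds hzD)).hasFDerivAt
      have hhz' : HasFDerivAt h (fderiv ℂ h z) (z + (0:ℂ) • v) := by simpa using hhz
      have hline := line_hasDerivAt z v 0
      have hcomp := hhz'.comp_hasDerivAt (0:ℂ) hline
      simpa [hF, Function.comp_def] using hcomp
    have hkey : ∀ ε > (0:ℝ), ‖fderiv ℂ h z v‖ ≤ (2*M + ε) / r := by
      intro ε hε
      have hmaps : MapsTo F (Metric.ball (0:ℂ) r) (Metric.ball (F 0) (2*M + ε)) := by
        intro t ht
        rw [mem_ball, dist_eq_norm]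
        have h1 : ‖F t‖ ≤ M := hbd _ (hmem t ht)
        have h0mem : (0:ℂ) ∈ Metric.ball (0:ℂ) r := mem_ball_self hrpos
        have h2 : ‖F 0‖ ≤ M := hbd _ (hmem 0 h0mem)
        calc ‖F t - F 0‖ ≤ ‖F t‖ + ‖F 0‖ := norm_sub_le _ _
          _ ≤ M + M := add_le_add h1 h2
          _ < 2*M + ε := by linarith
      have := Complex.norm_deriv_le_div_of_mapsTo_ball hd (hmaps.mono_right Metric.ball_subset_closedBall) hrpos
      rwa [hDF.deriv] at this
    have : ‖fderiv ℂ h z v‖ ≤ 2*M / r := by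
      by_contra hX
      push_neg at hX
      set c : ℝ := ‖fderiv ℂ h z v‖ - 2*M/r with hc
      have hcpos : 0 < c := by rw [hc]; linarith
      have hgap : (0:ℝ) < c * r / 2 := by positivity
      have hk := hkey _ hgap
      have heq : (c*r/2)/r = c/2 := by
        rw [div_eq_iff hrpos.ne']; ring
      rw [add_div, heq] at hk
      rw [hc] at hk
      linarith
    calc ‖fderiv ℂ h z v‖ ≤ 2*M/r := this
      _ = 2*M/δ * ‖v‖ := by rw [hr, div_div_eq_mul_div]; ring

/-- A locally uniform limit on an open set `D ⊆ E` of holomorphic maps is holomorphic. -/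
lemma limit_differentiableOn [FiniteDimensional ℂ E] {D : Set E} (hDo : IsOpen D)
    {ρseq : ℕ → E → E} {ρ : E → E}
    (hdiff : ∀ j, DifferentiableOn ℂ (ρseq j) D)
    (hρconv : TendstoLocallyUniformlyOn ρseq ρ atTop D) :
    DifferentiableOn ℂ ρ D := by
  intro x hx
  obtain ⟨ε, hε, hballD⟩ := Metric.isOpen_iff.1 hDo x hx
  set δ : ℝ := ε / 3 with hδdef
  have hδ : 0 < δ := by positivity
  have hball2 : Metric.ball x (2*δ) ⊆ D := by
    apply Subset.trans _ hballD
    apply Metric.ball_subset_ball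
    rw [hδdef]; linarith
  have hKD : Metric.closedBall x (2*δ) ⊆ D := by
    apply Subset.trans _ hballD
    intro y hy
    rw [Metric.mem_closedBall] at hy
    rw [mem_ball]
    calc dist y x ≤ 2*δ := hy
      _ < ε := by rw [hδdef]; linarith
  have hsD : Metric.ball x δ ⊆ D := fun y hy =>
    hball2 (Metric.ball_subset_ball (by linarith) hy)
  have hU : TendstoUniformlyOn ρseq ρ atTop (Metric.closedBall x (2*δ)) :=
    (tendstoLocallyUniformlyOn_iff_forall_isCompact hDo).1 hρconv _ hKD
      (isCompact_closedBall x (2*δ))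
  have hUC : UniformCauchySeqOn ρseq atTop (Metric.closedBall x (2*δ)) :=
    hU.uniformCauchySeqOn
  -- core estimate for derivatives
  have hfd : ∀ ε' > (0:ℝ), ∃ N, ∀ m ≥ N, ∀ n ≥ N, ∀ z ∈ Metric.ball x δ,
      dist (fderiv ℂ (ρseq m) z) (fderiv ℂ (ρseq n) z) < ε' := by
    intro ε' hε'
    obtain ⟨N, hN⟩ := Metric.uniformCauchySeqOn_iff.1 hUC (ε' * δ / 4)
      (by positivity)
    refine ⟨N, fun m hm n hn z hz => ?_⟩
    set h : E → E := fun y => ρseq m y - ρseq n y with hh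
    have hhd : DifferentiableOn ℂ h D := (hdiff m).sub (hdiff n)
    have hhbd : ∀ y ∈ Metric.ball x (2*δ), ‖h y‖ ≤ ε' * δ / 4 := by
      intro y hy
      have := hN m hm n hn y (Metric.ball_subset_closedBall hy)
      rw [dist_eq_norm] at this
      exact this.le
    have hfb := fderiv_bound_of_bound hDo hhd hδ hball2 (by positivity) hhbd hz
    have hzD : z ∈ D := hsD hz
    have hdm : DifferentiableAt ℂ (ρseq m) z := (hdiff m).differentiableAt (hDo.mem_nhds hzD)
    have hdn : DifferentiableAt ℂ (ρseq n) z := (hdiff n).differentiableAt (hDo.mem_nhds hzD)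
    have hsub : fderiv ℂ h z = fderiv ℂ (ρseq m) z - fderiv ℂ (ρseq n) z := fderiv_sub hdm hdn
    rw [dist_eq_norm, ← hsub]
    calc ‖fderiv ℂ h z‖ ≤ 2 * (ε' * δ / 4) / δ := hfb
      _ = ε' / 2 := by field_simp; ring
      _ < ε' := by linarith
  have hUCd : UniformCauchySeqOn (fun j => fderiv ℂ (ρseq j)) atTop (Metric.ball x δ) :=
    Metric.uniformCauchySeqOn_iff.2 hfd
  -- pointwise limits of the derivatives
  have hex : ∀ z : E, ∃ A : E →L[ℂ] E, z ∈ Metric.ball x δ →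
      Tendsto (fun j => fderiv ℂ (ρseq j) z) atTop (𝓝 A) := by
    intro z
    by_cases hz : z ∈ Metric.ball x δ
    · have hcs : CauchySeq (fun j => fderiv ℂ (ρseq j) z) := by
        rw [Metric.cauchySeq_iff]
        intro ε' hε'
        obtain ⟨N, hN⟩ := hfd ε' hε'
        exact ⟨N, fun m hm n hn => hN m hm n hn z hz⟩
      obtain ⟨A, hA⟩ := cauchySeq_tendsto_of_complete hcs
      exact ⟨A, fun _ => hA⟩
    · exact ⟨0, fun h => absurd h hz⟩
  choose g' hg' using hex
  have hunif' : TendstoUniformlyOn (fun j => fderiv ℂ (ρseq j)) g' atTop (Metric.ball x δ) :=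
    hUCd.tendstoUniformlyOn_of_tendsto (fun z hz => hg' z hz)
  have hHas : ∀ j : ℕ, ∀ z : E, z ∈ Metric.ball x δ →
      HasFDerivAt (ρseq j) (fderiv ℂ (ρseq j) z) z := fun j z hz =>
    ((hdiff j).differentiableAt (hDo.mem_nhds (hsD hz))).hasFDerivAt
  have hpt : ∀ z : E, z ∈ Metric.ball x δ →
      Tendsto (fun j => ρseq j z) atTop (𝓝 (ρ z)) := fun z hz =>
    hρconv.tendsto_at (hsD hz)
  have := hasFDerivAt_of_tendstoUniformlyOn Metric.isOpen_ball hunif' hHas hpt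
    (mem_ball_self hδ)
  exact this.differentiableAt.differentiableWithinAt

end Diff
section Fix
open scoped Topology
variable {E : Type*} [NormedAddCommGroup E] [NormedSpace ℂ E]
variable {D : Set E} {φseq : ℕ → ℂ → E} {φ : ℂ → E} {ρseq : ℕ → E → E} {ρ : E → E}

/-- If `x_m → x ∈ D` then `ρ_{k m} (x_m) → ρ x`, by equicontinuity (Schwarz). -/
lemma rho_seq_tendsto (hDo : IsOpen D) (hDb : Bornology.IsBounded D)
    (hgeo : ∀ j, IsComplexGeodesic D (φseq j))
    (hρ : ∀ j, IsLempertProjection D (φseq j) (ρseq j))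
    (hρconv : TendstoLocallyUniformlyOn ρseq ρ atTop D)
    {x : E} (hx : x ∈ D) {k : ℕ → ℕ} (hk : Tendsto k atTop atTop)
    {xseq : ℕ → E} (hxs : Tendsto xseq atTop (𝓝 x)) :
    Tendsto (fun m => ρseq (k m) (xseq m)) atTop (𝓝 (ρ x)) := by
  obtain ⟨R, hR⟩ := hDb.subset_ball x
  have hRpos : 0 < R := lt_of_le_of_lt dist_nonneg (mem_ball.1 (hR hx))
  obtain ⟨δ, hδ, hballD⟩ := Metric.isOpen_iff.1 hDo x hx
  set C : ℝ := 2 * R / δ with hC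
  have hCpos : 0 < C := by positivity
  have hpt : Tendsto (fun m => ρseq (k m) x) atTop (𝓝 (ρ x)) :=
    (hρconv.tendsto_at hx).comp hk
  rw [Metric.tendsto_atTop] at hpt hxs ⊢
  intro ε hε
  obtain ⟨N1, hN1⟩ := hpt (ε/2) (by positivity)
  obtain ⟨N2, hN2⟩ := hxs (min δ (ε / (2 * C))) (lt_min hδ (by positivity))
  refine ⟨max N1 N2, fun m hm => ?_⟩
  have hm1 : N1 ≤ m := le_trans (le_max_left _ _) hm
  have hm2 : N2 ≤ m := le_trans (le_max_right _ _) hm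
  have hxm := hN2 m hm2
  have hxmδ : ‖xseq m - x‖ < δ := by
    rw [← dist_eq_norm]; exact lt_of_lt_of_le hxm (min_le_left _ _)
  have hlip := holo_lipschitz hR (hρ (k m)).1 (rho_mapsTo hgeo hρ (k m)) hx hδ hballD hxmδ
  calc dist (ρseq (k m) (xseq m)) (ρ x)
      ≤ dist (ρseq (k m) (xseq m)) (ρseq (k m) x) + dist (ρseq (k m) x) (ρ x) :=
        dist_triangle _ _ _
    _ < ε/2 + ε/2 := by
        apply add_lt_add _ (hN1 m hm1)
        rw [dist_eq_norm]
        calc ‖ρseq (k m) (xseq m) - ρseq (k m) x‖ ≤ C * ‖xseq m - x‖ := hlip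
          _ < C * (ε / (2 * C)) := by
              apply mul_lt_mul_of_pos_left _ hCpos
              rw [← dist_eq_norm]
              exact lt_of_lt_of_le hxm (min_le_right _ _)
          _ = ε/2 := by field_simp
    _ = ε := by ring

/-- The limit `ρ` fixes the limit geodesic pointwise. -/
lemma keyFix (hDo : IsOpen D) (hDb : Bornology.IsBounded D)
    (hgeo : ∀ j, IsComplexGeodesic D (φseq j)) (hφ : IsComplexGeodesic D φ)
    (hconv : TendstoLocallyUniformlyOn φseq φ atTop uDisc)
    (hρ : ∀ j, IsLempertProjection D (φseq j) (ρseq j))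
    (hρconv : TendstoLocallyUniformlyOn ρseq ρ atTop D)
    {ζ : ℂ} (hζ : ζ ∈ uDisc) : ρ (φ ζ) = φ ζ := by
  have hφζD : φ ζ ∈ D := hφ.2.1 hζ
  have hxs : Tendsto (fun j => φseq j ζ) atTop (𝓝 (φ ζ)) := hconv.tendsto_at hζ
  have h1 : Tendsto (fun j => ρseq j (φseq j ζ)) atTop (𝓝 (ρ (φ ζ))) :=
    rho_seq_tendsto hDo hDb hgeo hρ hρconv hφζD tendsto_id hxs
  have h2 : Tendsto (fun j => ρseq j (φseq j ζ)) atTop (𝓝 (φ ζ)) := by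
    apply hxs.congr
    intro j
    exact ((hρ j).2.2.2.1 ζ hζ).symm
  exact tendsto_nhds_unique h1 h2

end Fix

section Hyperplane
open scoped Topology
variable {E : Type*} [NormedAddCommGroup E] [NormedSpace ℂ E]

/-- From a unit functional, get an almost-norming vector. -/
lemma exists_norming {M : E →L[ℂ] ℂ} (hM : ‖M‖ = 1) :
    ∃ m : E, M m = 1 ∧ ‖m‖ ≤ 2 := by
  have : ¬ (∀ v : E, ‖M v‖ ≤ (1/2) * ‖v‖) := by
    intro hall
    have := ContinuousLinearMap.opNorm_le_bound M (by norm_num) hall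
    rw [hM] at this; norm_num at this
  push_neg at this
  obtain ⟨v, hv⟩ := this
  have hvne : v ≠ 0 := by
    intro h; rw [h] at hv; simp at hv
  have hMv : M v ≠ 0 := by
    intro h; rw [h] at hv; simp at hv
    nlinarith [norm_pos_iff.2 hvne, norm_nonneg v]
  refine ⟨(M v)⁻¹ • v, ?_, ?_⟩
  · rw [map_smul, smul_eq_mul, inv_mul_cancel₀ hMv]
  · rw [norm_smul, norm_inv]
    have h1 : (1/2) * ‖v‖ < ‖M v‖ := hv
    have h2 : 0 < ‖M v‖ := lt_of_le_of_lt (by positivity) hv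
    rw [inv_mul_le_iff₀ h2]
    nlinarith [norm_nonneg v]

/-- Two disjoint hyperplane slices passing `ε`-close to the center of a ball of radius `2d`
are nearly parallel: points on one stay close to the other. -/
lemma hyperplane_squeeze {L M : E →L[ℂ] ℂ} (hL : ‖L‖ = 1) (hM : ‖M‖ = 1) {α β : ℂ}
    {x u : E} {d ε K : ℝ} (hd : 0 < d) (hε : 0 ≤ ε) (hεd : ε ≤ d/2) (hK : 0 ≤ K)
    (hdisj : ∀ y ∈ Metric.ball x (2*d), L y = α → M y = β → False)
    (hLx : ‖L x - α‖ ≤ ε) (hMx : ‖M x - β‖ ≤ ε)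
    (hMu : M u = β) (hux : ‖u - x‖ ≤ K) :
    ‖L u - α‖ ≤ 3*ε + 3*ε/d * (K + 2*ε) := by
  obtain ⟨m, hm1, hm2⟩ := exists_norming hM
  set p : E := x - (M x - β) • m with hp
  have hMp : M p = β := by
    rw [hp, map_sub, map_smul, smul_eq_mul, hm1, mul_one]; ring
  have hpx : ‖p - x‖ ≤ 2*ε := by
    rw [hp]
    have : x - (M x - β) • m - x = -((M x - β) • m) := by abel
    rw [this, norm_neg, norm_smul]
    calc ‖M x - β‖ * ‖m‖ ≤ ε * 2 := mul_le_mul hMx hm2 (norm_nonneg m) hε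
      _ = 2*ε := by ring
  have hunit : ∀ y : E, ‖L y‖ ≤ ‖y‖ := fun y => by
    calc ‖L y‖ ≤ ‖L‖ * ‖y‖ := L.le_opNorm y
      _ = ‖y‖ := by rw [hL, one_mul]
  have hLp : ‖L p - α‖ ≤ 3*ε := by
    have hdecomp : L p - α = (L x - α) + (L p - L x) := by ring
    calc ‖L p - α‖ = ‖(L x - α) + (L p - L x)‖ := by rw [hdecomp]
      _ ≤ ‖L x - α‖ + ‖L p - L x‖ := norm_add_le _ _
      _ ≤ ε + ‖p - x‖ := add_le_add hLx (by rw [← map_sub]; exact hunit _)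
      _ ≤ ε + 2*ε := by linarith
      _ = 3*ε := by ring
  -- the key claim : L is small on ker M
  have hker : ∀ e : E, M e = 0 → ‖L e‖ ≤ 3*ε/d * ‖e‖ := by
    intro e hMe
    by_contra hcon
    push_neg at hcon
    have hLe : L e ≠ 0 := by
      intro h
      rw [h] at hcon
      simp only [norm_zero] at hcon
      have : 0 ≤ 3*ε/d * ‖e‖ := by positivity
      linarith
    set t : ℂ := (α - L p) / (L e) with ht
    set q : E := p + t • e with hq
    have hLq : L q = α := by
      rw [hq, map_add, map_smul, smul_eq_mul, ht, div_mul_cancel₀ _ hLe]; ring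
    have hMq : M q = β := by
      rw [hq, map_add, map_smul, smul_eq_mul, hMe, mul_zero, add_zero, hMp]
    have hte : ‖t • e‖ < d := by
      rw [norm_smul, ht, norm_div]
      rcases eq_or_lt_of_le (norm_nonneg (α - L p)) with h0 | h0
      · rw [← h0]; simp [hd]
      · have hLepos : 0 < ‖L e‖ := norm_pos_iff.2 hLe
        rw [div_mul_eq_mul_div, div_lt_iff₀ hLepos]
        have h1 : ‖α - L p‖ ≤ 3*ε := by rw [norm_sub_rev]; exact hLp
        have hepos : 0 < ‖e‖ := by
          rcases eq_or_ne e 0 with rfl | he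
          · exfalso; apply hLe; simp
          · exact norm_pos_iff.2 he
        calc ‖α - L p‖ * ‖e‖ ≤ 3*ε * ‖e‖ :=
              mul_le_mul_of_nonneg_right h1 (norm_nonneg e)
          _ = (3*ε/d * ‖e‖) * d := by
              rw [div_mul_eq_mul_div, div_mul_eq_mul_div, mul_div_cancel_right₀ _ hd.ne']
          _ < ‖L e‖ * d := mul_lt_mul_of_pos_right hcon hd
          _ = d * ‖L e‖ := by ring
    have hqball : q ∈ Metric.ball x (2*d) := by
      rw [mem_ball_iff_norm]
      calc ‖q - x‖ = ‖(p - x) + t • e‖ := by rw [hq]; congr 1; abel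
        _ ≤ ‖p - x‖ + ‖t • e‖ := norm_add_le _ _
        _ < 2*ε + d := add_lt_add_of_le_of_lt hpx hte
        _ ≤ 2*d := by linarith
    exact hdisj q hqball hLq hMq
  -- conclude
  have hup : M (u - p) = 0 := by rw [map_sub, hMu, hMp, sub_self]
  have hupn : ‖u - p‖ ≤ K + 2*ε := by
    calc ‖u - p‖ = ‖(u - x) - (p - x)‖ := by congr 1; abel
      _ ≤ ‖u - x‖ + ‖p - x‖ := norm_sub_le _ _
      _ ≤ K + 2*ε := add_le_add hux hpx
  have hdecomp2 : L u - α = (L p - α) + (L u - L p) := by ring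
  calc ‖L u - α‖ = ‖(L p - α) + (L u - L p)‖ := by rw [hdecomp2]
    _ ≤ ‖L p - α‖ + ‖L u - L p‖ := norm_add_le _ _
    _ ≤ 3*ε + 3*ε/d * ‖u - p‖ := add_le_add hLp (by rw [← map_sub]; exact hker _ hup)
    _ ≤ 3*ε + 3*ε/d * (K + 2*ε) := by
        apply add_le_add le_rfl
        apply mul_le_mul_of_nonneg_left hupn (by positivity)

/-- Normalised version of the affine-fiber property of a Lempert projection. -/
lemma normalize_fiber [FiniteDimensional ℂ E] {D : Set E} {ψ : ℂ → E} {r : E → E}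
    (hLP : IsLempertProjection D ψ r) (hψm : MapsTo ψ uDisc D)
    {θ : ℂ} (hθ : θ ∈ uDisc) :
    ∃ Mh : E →L[ℂ] ℂ, ‖Mh‖ = 1 ∧
      {w ∈ D | r w = ψ θ} = {w ∈ D | Mh w = Mh (ψ θ)} := by
  obtain ⟨L0, c0, hL0, hset⟩ := hLP.2.2.2.2 θ hθ
  set Lc : E →L[ℂ] ℂ := LinearMap.toContinuousLinearMap L0 with hLc
  have happ : ∀ y : E, Lc y = L0 y := fun y => rfl
  have hLcne : Lc ≠ 0 := by
    intro h
    apply hL0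
    ext y
    have := congrArg (fun A => A y) h
    simpa [happ] using this
  have hn : 0 < ‖Lc‖ := norm_pos_iff.2 hLcne
  set Mh : E →L[ℂ] ℂ := ((‖Lc‖⁻¹ : ℝ) : ℂ) • Lc with hMh
  have hMhnorm : ‖Mh‖ = 1 := by
    rw [hMh, norm_smul (α := ℂ) (((‖Lc‖⁻¹ : ℝ)) : ℂ) Lc, Complex.norm_real,
      Real.norm_of_nonneg (by positivity)]
    field_simp
  have hψD : ψ θ ∈ D := hψm hθ
  have hfix : r (ψ θ) = ψ θ := hLP.2.2.2.1 θ hθ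
  have hmem : ψ θ ∈ {w ∈ D | L0 w = c0} := by
    rw [← hset]; exact ⟨hψD, hfix⟩
  have hc0 : L0 (ψ θ) = c0 := hmem.2
  have hMhy : ∀ y : E, Mh y = ((‖Lc‖⁻¹ : ℝ) : ℂ) * L0 y := fun y => by
    rw [hMh]; simp [happ]
  have hscal : ((‖Lc‖⁻¹ : ℝ) : ℂ) ≠ 0 := by
    simp only [ne_eq, Complex.ofReal_eq_zero, inv_eq_zero]
    exact hn.ne'
  refine ⟨Mh, hMhnorm, ?_⟩
  ext w
  simp only [mem_setOf_eq]
  constructor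
  · rintro ⟨hwD, hww⟩
    have : L0 w = c0 := by
      have hw' : w ∈ {w ∈ D | L0 w = c0} := by rw [← hset]; exact ⟨hwD, hww⟩
      exact hw'.2
    refine ⟨hwD, ?_⟩
    rw [hMhy, hMhy, this, hc0]
  · rintro ⟨hwD, hww⟩
    have hL0w : L0 w = c0 := by
      rw [hMhy, hMhy] at hww
      have := mul_left_cancel₀ hscal hww
      rw [this, hc0]
    have hw' : w ∈ {w ∈ D | r w = ψ θ} := by
      rw [hset]; exact ⟨hwD, hL0w⟩
    exact ⟨hwD, hw'.2⟩

end Hyperplane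
section Fiber
open scoped Topology
variable {E : Type*} [NormedAddCommGroup E] [NormedSpace ℂ E] [FiniteDimensional ℂ E]
variable {D : Set E} {φseq : ℕ → ℂ → E} {φ : ℂ → E} {ρseq : ℕ → E → E} {ρ : E → E}

lemma keyFiber (hDo : IsOpen D) (hDb : Bornology.IsBounded D) (hDconv : Convex ℝ D)
    (hgeo : ∀ j, IsComplexGeodesic D (φseq j)) (hφ : IsComplexGeodesic D φ)
    (hconv : TendstoLocallyUniformlyOn φseq φ atTop uDisc)
    (hρ : ∀ j, IsLempertProjection D (φseq j) (ρseq j))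
    (hρconv : TendstoLocallyUniformlyOn ρseq ρ atTop D)
    {ζ : ℂ} (hζ : ζ ∈ uDisc) :
    ∃ (L : E →ₗ[ℂ] ℂ) (c : ℂ), L ≠ 0 ∧
      {w ∈ D | ρ w = φ ζ} = {w ∈ D | L w = c} := by
  classical
  -- normalized functionals for the fibers over ζ
  have hLex : ∀ j, ∃ Lh : E →L[ℂ] ℂ, ‖Lh‖ = 1 ∧
      {w ∈ D | ρseq j w = φseq j ζ} = {w ∈ D | Lh w = Lh (φseq j ζ)} :=
    fun j => normalize_fiber (hρ j) (hgeo j).2.1 hζ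
  choose Lh hLh1 hLh2 using hLex
  -- compactness of the unit sphere in the dual
  have hsphere : IsCompact (Metric.sphere (0 : E →L[ℂ] ℂ) 1) := isCompact_sphere 0 1
  have hmemS : ∀ j, Lh j ∈ Metric.sphere (0 : E →L[ℂ] ℂ) 1 := fun j => by
    rw [mem_sphere_zero_iff_norm]; exact hLh1 j
  obtain ⟨Li, hLiS, s, hs, hLs⟩ := hsphere.tendsto_subseq hmemS
  have hLinorm : ‖Li‖ = 1 := mem_sphere_zero_iff_norm.1 hLiS
  have hLine : Li ≠ 0 := by
    intro h; rw [h, norm_zero] at hLinorm; norm_num at hLinorm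
  have hstend : Tendsto s atTop atTop := hs.tendsto_atTop
  -- evaluation limits
  have heval : ∀ (xs : ℕ → E) (x : E), Tendsto xs atTop (𝓝 x) →
      Tendsto (fun k => Lh (s k) (xs k)) atTop (𝓝 (Li x)) := by
    intro xs x hxs
    have hpair : Tendsto (fun k => ((Lh (s k) : E →L[ℂ] ℂ), xs k)) atTop (𝓝 (Li, x)) :=
      hLs.prodMk_nhds hxs
    exact ((isBoundedBilinearMap_apply (𝕜 := ℂ) (E := E) (F := ℂ)).continuous.tendsto
      (Li, x)).comp hpair
  have hφζ : Tendsto (fun k => φseq (s k) ζ) atTop (𝓝 (φ ζ)) :=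
    (hconv.tendsto_at hζ).comp hstend
  have hctend : Tendsto (fun k => Lh (s k) (φseq (s k) ζ)) atTop (𝓝 (Li (φ ζ))) :=
    heval _ _ hφζ
  have hφζD : φ ζ ∈ D := hφ.2.1 hζ
  obtain ⟨ε0, hε0, hballD⟩ := Metric.isOpen_iff.1 hDo _ hφζD
  set d : ℝ := ε0/2 with hddef
  have hdpos : 0 < d := by positivity
  have hball2d : Metric.ball (φ ζ) (2*d) ⊆ D := by
    have h2d : 2*d = ε0 := by rw [hddef]; ring
    rw [h2d]; exact hballD
  have hlin : (Li : E →ₗ[ℂ] ℂ) ≠ 0 := by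
    intro h
    apply hLine
    ext y
    have := congrArg (fun A : E →ₗ[ℂ] ℂ => A y) h
    simpa using this
  refine ⟨(Li : E →ₗ[ℂ] ℂ), Li (φ ζ), hlin, ?_⟩
  ext w
  simp only [mem_setOf_eq, ContinuousLinearMap.coe_coe]
  constructor
  · -- ⊆ : w in the fiber implies w on the hyperplane
    rintro ⟨hwD, hρw⟩
    refine ⟨hwD, ?_⟩
    have hηex : ∀ j, ∃ e, e ∈ uDisc ∧ φseq j e = ρseq j w := fun j => by
      obtain ⟨e, he, hee⟩ := (hρ j).2.1 hwD
      exact ⟨e, he, hee⟩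
    choose η hη1 hη2 using hηex
    have hηt : Tendsto η atTop (𝓝 ζ) :=
      keyEta hDo hDconv hgeo hφ hconv hρ hρconv hwD hζ hρw (fun j => ⟨hη1 j, hη2 j⟩)
    have hMex : ∀ j, ∃ Mh : E →L[ℂ] ℂ, ‖Mh‖ = 1 ∧
        {w' ∈ D | ρseq j w' = φseq j (η j)} = {w' ∈ D | Mh w' = Mh (φseq j (η j))} :=
      fun j => normalize_fiber (hρ j) (hgeo j).2.1 (hη1 j)
    choose Mh hMh1 hMh2 using hMex
    have hxρ : Tendsto (fun k => ρseq (s k) w) atTop (𝓝 (φ ζ)) := by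
      have := (hρconv.tendsto_at hwD).comp hstend
      rwa [hρw] at this
    set a : ℕ → ℝ := fun k => ‖φ ζ - φseq (s k) ζ‖ with hadef
    set b : ℕ → ℝ := fun k => ‖φ ζ - ρseq (s k) w‖ with hbdef
    have hat : Tendsto a atTop (𝓝 0) := by
      have := (tendsto_iff_norm_sub_tendsto_zero.1 hφζ)
      apply this.congr
      intro k
      rw [norm_sub_rev]
    have hbt : Tendsto b atTop (𝓝 0) := by
      have := (tendsto_iff_norm_sub_tendsto_zero.1 hxρ)
      apply this.congr
      intro k
      rw [norm_sub_rev]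
    set ek : ℕ → ℝ := fun k => max (a k) (b k) with hekdef
    have het : Tendsto ek atTop (𝓝 0) := by
      have := hat.max hbt
      simpa using this
    set K : ℝ := ‖w - φ ζ‖ with hKdef
    have hclaim : ∀ᶠ k in atTop, ‖Lh (s k) w - Lh (s k) (φseq (s k) ζ)‖ ≤
        3*(ek k) + 3*(ek k)/d * (K + 2*(ek k)) := by
      have hεsmall : ∀ᶠ k in atTop, ek k < d/2 :=
        het.eventually (gt_mem_nhds (by positivity))
      filter_upwards [hεsmall] with k hk
      have heknn : 0 ≤ ek k := le_trans (norm_nonneg _) (le_max_left _ _)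
      have hwfibM : ρseq (s k) w = φseq (s k) (η (s k)) := (hη2 (s k)).symm
      by_cases hcase : η (s k) = ζ
      · have hfib : ρseq (s k) w = φseq (s k) ζ := by
          rw [hcase] at hwfibM; exact hwfibM
        have hmem : w ∈ {w' ∈ D | Lh (s k) w' = Lh (s k) (φseq (s k) ζ)} := by
          rw [← hLh2 (s k)]; exact ⟨hwD, hfib⟩
        rw [hmem.2, sub_self, norm_zero]
        positivity
      · refine hyperplane_squeeze (β := Mh (s k) (φseq (s k) (η (s k))))
          (hLh1 (s k)) (hMh1 (s k)) hdpos heknn (le_of_lt hk)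
          (norm_nonneg (w - φ ζ)) ?_ ?_ ?_ ?_ le_rfl
        · -- disjointness
          intro y hy hLy hMy
          have hyD : y ∈ D := hball2d hy
          have hy1 : ρseq (s k) y = φseq (s k) ζ := by
            have : y ∈ {w' ∈ D | Lh (s k) w' = Lh (s k) (φseq (s k) ζ)} := ⟨hyD, hLy⟩
            rw [← hLh2 (s k)] at this
            exact this.2
          have hy2 : ρseq (s k) y = φseq (s k) (η (s k)) := by
            have : y ∈ {w' ∈ D | Mh (s k) w' = Mh (s k) (φseq (s k) (η (s k)))} := ⟨hyD, hMy⟩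
            rw [← hMh2 (s k)] at this
            exact this.2
          have heqq : φseq (s k) ζ = φseq (s k) (η (s k)) := by rw [← hy1, hy2]
          exact hcase (geodesic_inj (hgeo (s k)) hζ (hη1 (s k)) heqq).symm
        · -- hLx
          calc ‖Lh (s k) (φ ζ) - Lh (s k) (φseq (s k) ζ)‖
              = ‖Lh (s k) (φ ζ - φseq (s k) ζ)‖ := by rw [map_sub]
            _ ≤ ‖Lh (s k)‖ * ‖φ ζ - φseq (s k) ζ‖ := (Lh (s k)).le_opNorm _
            _ = a k := by rw [hLh1 (s k), one_mul]
            _ ≤ ek k := le_max_left _ _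
        · -- hMx
          calc ‖Mh (s k) (φ ζ) - Mh (s k) (φseq (s k) (η (s k)))‖
              = ‖Mh (s k) (φ ζ - φseq (s k) (η (s k)))‖ := by rw [map_sub]
            _ = ‖Mh (s k) (φ ζ - ρseq (s k) w)‖ := by rw [← hwfibM]
            _ ≤ ‖Mh (s k)‖ * ‖φ ζ - ρseq (s k) w‖ := (Mh (s k)).le_opNorm _
            _ = b k := by rw [hMh1 (s k), one_mul]
            _ ≤ ek k := le_max_right _ _
        · -- hMu
          have : w ∈ {w' ∈ D | Mh (s k) w' = Mh (s k) (φseq (s k) (η (s k)))} := by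
            rw [← hMh2 (s k)]; exact ⟨hwD, hwfibM⟩
          exact this.2
    have hLHS : Tendsto (fun k => ‖Lh (s k) w - Lh (s k) (φseq (s k) ζ)‖) atTop
        (𝓝 ‖Li w - Li (φ ζ)‖) :=
      ((heval (fun _ => w) w tendsto_const_nhds).sub hctend).norm
    have hRHS : Tendsto (fun k => 3*(ek k) + 3*(ek k)/d * (K + 2*(ek k))) atTop (𝓝 0) := by
      have h1 : Tendsto (fun k => 3*(ek k)) atTop (𝓝 (3*0)) := het.const_mul 3
      have h2 : Tendsto (fun k => 3*(ek k)/d) atTop (𝓝 (3*0/d)) := (het.const_mul 3).div_const d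
      have h3 : Tendsto (fun k => K + 2*(ek k)) atTop (𝓝 (K + 2*0)) :=
        tendsto_const_nhds.add (het.const_mul 2)
      have := h1.add (h2.mul h3)
      simpa using this
    have hle : ‖Li w - Li (φ ζ)‖ ≤ 0 := le_of_tendsto_of_tendsto hLHS hRHS hclaim
    have : Li w - Li (φ ζ) = 0 := norm_le_zero_iff.1 hle
    exact sub_eq_zero.1 this
  · -- ⊇ : the hyperplane is contained in the fiber
    rintro ⟨hwD, hLw⟩
    refine ⟨hwD, ?_⟩
    have hvex : ∃ v : E, Li v = 1 := by
      have hex0 : ∃ v0, Li v0 ≠ 0 := by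
        by_contra h
        push_neg at h
        exact hLine (ContinuousLinearMap.ext fun y => by simp [h y])
      obtain ⟨v0, hv0⟩ := hex0
      exact ⟨(Li v0)⁻¹ • v0, by rw [map_smul, smul_eq_mul, inv_mul_cancel₀ hv0]⟩
    obtain ⟨v, hv⟩ := hvex
    have hnum : Tendsto (fun k => Lh (s k) (φseq (s k) ζ) - Lh (s k) w) atTop
        (𝓝 (Li (φ ζ) - Li w)) := hctend.sub (heval (fun _ => w) w tendsto_const_nhds)
    have hden : Tendsto (fun k => Lh (s k) v) atTop (𝓝 (Li v)) :=
      heval (fun _ => v) v tendsto_const_nhds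
    rw [hv] at hden
    set t : ℕ → ℂ := fun k => (Lh (s k) (φseq (s k) ζ) - Lh (s k) w) / (Lh (s k) v) with htdef
    have htz : Tendsto t atTop (𝓝 0) := by
      have := hnum.div hden one_ne_zero
      rw [hLw, sub_self, zero_div] at this
      exact this
    set wk : ℕ → E := fun k => w + t k • v with hwkdef
    have hwk : Tendsto wk atTop (𝓝 w) := by
      have h1 : Tendsto (fun k => t k • v) atTop (𝓝 ((0:ℂ) • v)) := htz.smul_const v
      rw [zero_smul] at h1
      have h2 := (tendsto_const_nhds (x := w) (f := (atTop : Filter ℕ))).add h1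
      simpa using h2
    have hev1 : ∀ᶠ k in atTop, wk k ∈ D := hwk.eventually_mem (hDo.mem_nhds hwD)
    have hev2 : ∀ᶠ k in atTop, Lh (s k) v ≠ 0 := hden.eventually_ne one_ne_zero
    have hevfib : ∀ᶠ k in atTop, ρseq (s k) (wk k) = φseq (s k) ζ := by
      filter_upwards [hev1, hev2] with k h1 h2
      have hLwk : Lh (s k) (wk k) = Lh (s k) (φseq (s k) ζ) := by
        show Lh (s k) (w + t k • v) = _
        rw [map_add, map_smul, smul_eq_mul, htdef]
        rw [div_mul_cancel₀ _ h2]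
        ring
      have hmem : wk k ∈ {w' ∈ D | Lh (s k) w' = Lh (s k) (φseq (s k) ζ)} := ⟨h1, hLwk⟩
      rw [← hLh2 (s k)] at hmem
      exact hmem.2
    have h5 : Tendsto (fun k => ρseq (s k) (wk k)) atTop (𝓝 (ρ w)) :=
      rho_seq_tendsto hDo hDb hgeo hρ hρconv hwD hstend hwk
    have h6 : Tendsto (fun k => ρseq (s k) (wk k)) atTop (𝓝 (φ ζ)) :=
      hφζ.congr' (hevfib.mono fun k hk => hk.symm)
    exact tendsto_nhds_unique h5 h6

end Fiber
/-- a limit of Lempert projections associated to converging complex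
geodesics is a Lempert projection associated to the limit geodesic. -/
theorem stmt9 {n : ℕ} (D : Set (EuclideanSpace ℂ (Fin n)))
    (hDo : IsOpen D) (hDb : Bornology.IsBounded D) (hDconv : Convex ℝ D)
    (φseq : ℕ → ℂ → EuclideanSpace ℂ (Fin n))
    (hgeo : ∀ j, IsComplexGeodesic D (φseq j))
    (φ : ℂ → EuclideanSpace ℂ (Fin n))
    (hφ : IsComplexGeodesic D φ)
    (hconv : TendstoLocallyUniformlyOn φseq φ atTop uDisc)
    (ρseq : ℕ → EuclideanSpace ℂ (Fin n) → EuclideanSpace ℂ (Fin n))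
    (hρ : ∀ j, IsLempertProjection D (φseq j) (ρseq j))
    (ρ : EuclideanSpace ℂ (Fin n) → EuclideanSpace ℂ (Fin n))
    (hρconv : TendstoLocallyUniformlyOn ρseq ρ atTop D) :
    IsLempertProjection D φ ρ ∧ ρ '' D = φ '' uDisc := by
  have hmaps : MapsTo ρ D (φ '' uDisc) := by
    intro z hz
    obtain ⟨ζ, hζ, heq⟩ := keyC hDo hDconv hgeo hφ hconv hρ hρconv hz
    exact ⟨ζ, hζ, heq.symm⟩
  have hfix : ∀ ζ ∈ uDisc, ρ (φ ζ) = φ ζ := fun ζ hζ =>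
    keyFix hDo hDb hgeo hφ hconv hρ hρconv hζ
  refine ⟨⟨?_, hmaps, ?_, hfix, ?_⟩, ?_⟩
  · exact limit_differentiableOn hDo (fun j => (hρ j).1) hρconv
  · intro z hz
    obtain ⟨ζ, hζ, heq⟩ := keyC hDo hDconv hgeo hφ hconv hρ hρconv hz
    rw [heq, hfix ζ hζ]
  · intro ζ hζ
    exact keyFiber hDo hDb hDconv hgeo hφ hconv hρ hρconv hζ
  · apply Set.Subset.antisymm
    · rintro _ ⟨z, hz, rfl⟩
      exact hmaps hz
    · rintro _ ⟨ζ, hζ, rfl⟩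
      exact ⟨φ ζ, hφ.2.1 hζ, hfix ζ hζ⟩
end
end
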